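/- arXiv:math/9806036 — 3 statements merged into one kernel-verified Lean document; each statement's English description precedes it below -/
import Mathlib

section
/- For natural numbers n, m let a_m(n) be the number of words of length n over V having exactly m occurrences of B, and let F(s,t) be the formal power series in s over ℤ[t] whose coefficient of s^n is Σ_m a_m(n) t^m. Then F(s,t) is rational: there exist polynomials P, Q in (ℤ[t])[s] such that the constant coefficient (in s) of Q equals 1 and Q · F = P in (ℤ[t])[[s]]. -/
/-- The finite set of occurrences of a member of `B` in the word `w`. -/
def Occs {V : Type*} [DecidableEq V] (B : Finset (List V)) (w : List V) :
    Finset (ℕ × List V) :=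
  (Finset.range (w.length + 1) ×ˢ B).filter fun p => (w.drop p.1).take p.2.length = p.2

/-- `a_m(n)`: the number of words of length `n` with exactly `m` occurrences of `B`. -/
noncomputable def occCount {V : Type*} [Fintype V] [DecidableEq V]
    (B : Finset (List V)) (n m : ℕ) : ℕ :=
  Nat.card {f : Fin n → V // (Occs B (List.ofFn f)).card = m}

/-- `F(s,t) ∈ ℤ[t][[s]]`: coefficient of `s^n` is `∑_m a_m(n) t^m` (here
`m ≤ (n+1)·|B|` since there are at most that many occurrences). -/
noncomputable def occGF {V : Type*} [Fintype V] [DecidableEq V]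
    (B : Finset (List V)) : PowerSeries (Polynomial ℤ) :=
  PowerSeries.mk fun n =>
    ∑ m ∈ Finset.range ((n + 1) * B.card + 1),
      (occCount B n m : Polynomial ℤ) * Polynomial.X ^ m

section OccLemmas
open Finset Polynomial Matrix
variable {V : Type*} [DecidableEq V]

lemma occs_cons (B : Finset (List V)) (a : V) (w : List V) :
    (Occs B (a :: w)).card
      = (Occs B w).card + (B.filter fun b => b <+: a :: w).card := by
  classical
  have hset : Occs B (a :: w) =
      ((Occs B w).map ⟨fun p => (p.1 + 1, p.2), show Function.Injective _ from by
        intro p q h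
        simpa [Prod.ext_iff] using h⟩)
      ∪ ((B.filter fun b => b <+: a :: w).map ⟨fun b => ((0 : ℕ), b), show Function.Injective _ from by
        intro p q h
        simpa using h⟩) := by
    ext ⟨i, b⟩
    simp only [Occs, mem_union, Finset.mem_map, mem_filter, mem_product, Finset.mem_range,
      Function.Embedding.coeFn_mk, Prod.ext_iff, List.length_cons]
    constructor
    · rintro ⟨⟨hi, hb⟩, hmatch⟩
      cases i with
      | zero =>
        right
        refine ⟨b, ⟨hb, ?_⟩, rfl, rfl⟩
        rw [List.prefix_iff_eq_take]
        simpa using hmatch.symm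
      | succ j =>
        left
        refine ⟨(j, b), ⟨⟨?_, hb⟩, ?_⟩, rfl, rfl⟩
        · omega
        · simpa using hmatch
    · rintro (⟨⟨j, b'⟩, ⟨⟨hj, hb⟩, hmatch⟩, hi, hbb⟩ | ⟨b', ⟨hb, hpre⟩, hi, hbb⟩)
      · subst hi; subst hbb
        refine ⟨⟨by omega, hb⟩, by simpa using hmatch⟩
      · subst hi; subst hbb
        refine ⟨⟨by omega, hb⟩, ?_⟩
        rw [List.prefix_iff_eq_take] at hpre
        simpa using hpre.symm
  rw [hset, Finset.card_union_of_disjoint, Finset.card_map, Finset.card_map]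
  · rw [Finset.disjoint_left]
    rintro ⟨i, b⟩ h1 h2
    simp only [Finset.mem_map, Function.Embedding.coeFn_mk, Prod.ext_iff] at h1 h2
    obtain ⟨p, _, hp1, _⟩ := h1
    obtain ⟨b', _, hb1, _⟩ := h2
    omega

lemma prefix_filter_take (B : Finset (List V)) {K : ℕ}
    (hK : ∀ b ∈ B, b.length ≤ K + 1) (a : V) (w : List V) :
    (B.filter fun b => b <+: a :: w) = B.filter fun b => b <+: a :: w.take K := by
  apply Finset.filter_congr
  intro b hb
  cases b with
  | nil => simp
  | cons c b' =>
    simp only [List.cons_prefix_cons]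
    have hlen : b'.length ≤ K := by
      have := hK _ hb; simpa using this
    rw [List.prefix_take_iff]
    tauto

omit [DecidableEq V] in
lemma take_cons_take (a : V) (w : List V) (K : ℕ) :
    (a :: w.take K).take K = (a :: w).take K := by
  cases K with
  | zero => simp
  | succ j =>
    simp only [List.take_succ_cons, List.take_take]
    rw [Nat.min_eq_left (by omega)]

lemma occ_card_le (B : Finset (List V)) (w : List V) :
    (Occs B w).card ≤ (w.length + 1) * B.card := by
  calc (Occs B w).card ≤ ((Finset.range (w.length + 1)) ×ˢ B).card :=
        Finset.card_filter_le _ _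
    _ = (w.length + 1) * B.card := by
        rw [Finset.card_product, Finset.card_range]

lemma rational_of_linear_rec {R : Type*} [CommRing R] (F : PowerSeries R) (k N : ℕ)
    (q : ℕ → R)
    (h : ∀ n, N ≤ n → (PowerSeries.coeff (n + k)) F
        = ∑ i ∈ Finset.range k, q i * (PowerSeries.coeff (n + i)) F) :
    ∃ P Q : Polynomial R, Q.coeff 0 = 1 ∧ (Q : PowerSeries R) * F = P := by
  classical
  set Q : Polynomial R := 1 - ∑ i ∈ Finset.range k, Polynomial.C (q i) * Polynomial.X ^ (k - i)
    with hQdef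
  have hq0 : Q.coeff 0 = 1 := by
    rw [hQdef, Polynomial.coeff_sub, Polynomial.coeff_one, Polynomial.finset_sum_coeff]
    rw [Finset.sum_eq_zero, sub_zero]
    · simp
    · intro i hi
      rw [Finset.mem_range] at hi
      rw [Polynomial.coeff_C_mul, Polynomial.coeff_X_pow, if_neg (by omega), mul_zero]
  have hcoe : (Q : PowerSeries R) = 1 - ∑ i ∈ Finset.range k,
      PowerSeries.C (q i) * PowerSeries.X ^ (k - i) := by
    rw [hQdef, ← Polynomial.coeToPowerSeries.ringHom_apply, map_sub, _root_.map_one, map_sum]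
    congr 1
    refine Finset.sum_congr rfl fun i _ => ?_
    rw [_root_.map_mul, _root_.map_pow, Polynomial.coeToPowerSeries.ringHom_apply,
      Polynomial.coeToPowerSeries.ringHom_apply, Polynomial.coe_C, Polynomial.coe_X]
  have key : ∀ m, N + k ≤ m → (PowerSeries.coeff m) ((Q : PowerSeries R) * F) = 0 := by
    intro m hm
    obtain ⟨n, rfl⟩ : ∃ n, m = n + k := ⟨m - k, by omega⟩
    have hn : N ≤ n := by omega
    rw [hcoe, sub_mul, one_mul, Finset.sum_mul, map_sub, map_sum]
    have hterm : ∀ i ∈ Finset.range k,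
        (PowerSeries.coeff (n + k)) (PowerSeries.C (q i) * PowerSeries.X ^ (k - i) * F)
          = q i * (PowerSeries.coeff (n + i)) F := by
      intro i hi
      rw [Finset.mem_range] at hi
      rw [mul_assoc, PowerSeries.coeff_C_mul, PowerSeries.coeff_X_pow_mul']
      rw [if_pos (by omega)]
      have e : n + k - (k - i) = n + i := by omega
      rw [e]
    rw [Finset.sum_congr rfl hterm, h n hn, sub_self]
  refine ⟨PowerSeries.trunc (N + k) ((Q : PowerSeries R) * F), Q, hq0, ?_⟩
  ext m
  rw [Polynomial.coeff_coe, PowerSeries.coeff_trunc]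
  split_ifs with hm
  · rfl
  · exact key m (by omega)

end OccLemmas

open Finset Polynomial Matrix

section Machine

variable {V : Type*} [Fintype V] [DecidableEq V]

/-- The shift-register step: prepend a letter and keep the first `K` letters. -/
def stepS {K : ℕ} (u : List.Vector V K) (a : V) : List.Vector V K :=
  ⟨(a :: u.1).take K, by simp [List.length_take, u.2]⟩

omit [Fintype V] [DecidableEq V] in
lemma vec_eq_iff {K : ℕ} (u v : List.Vector V K) : u = v ↔ u.1 = v.1 :=
  Subtype.ext_iff

/-- The state of a word: its first `K` letters. -/
def toState {K n : ℕ} (hn : K ≤ n) (f : Fin n → V) : List.Vector V K :=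
  ⟨(List.ofFn f).take K, by rw [List.length_take, List.length_ofFn]; omega⟩

/-- The transfer matrix. -/
noncomputable def TM (B : Finset (List V)) (K : ℕ) :
    Matrix (List.Vector V K) (List.Vector V K) (Polynomial ℤ) :=
  fun u' u => ∑ a ∈ Finset.univ.filter (fun a : V => stepS u a = u'),
    Polynomial.X ^ (B.filter fun b => b <+: a :: u.1).card

/-- The state vector of generating polynomials. -/
noncomputable def Avec (B : Finset (List V)) (K n : ℕ) : List.Vector V K → Polynomial ℤ :=
  fun u => ∑ f ∈ Finset.univ.filter (fun f : Fin n → V => (List.ofFn f).take K = u.1),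
    Polynomial.X ^ (Occs B (List.ofFn f)).card

omit [Fintype V] [DecidableEq V] in
lemma ofFn_cons' {n : ℕ} (a : V) (f : Fin n → V) :
    List.ofFn (Fin.cons a f : Fin (n + 1) → V) = a :: List.ofFn f := by
  simp [List.ofFn_succ]

lemma Avec_rec (B : Finset (List V)) {K : ℕ} (hK : ∀ b ∈ B, b.length ≤ K + 1)
    {n : ℕ} (hn : K ≤ n) :
    Avec B K (n + 1) = TM B K *ᵥ Avec B K n := by
  classical
  funext u'
  set σ : (Fin n → V) → List.Vector V K := toState hn with hσ
  have hL : Avec B K (n + 1) u'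
      = ∑ p : V × (Fin n → V),
          if (List.ofFn (Fin.cons p.1 p.2 : Fin (n + 1) → V)).take K = u'.1
          then Polynomial.X ^ (Occs B (List.ofFn (Fin.cons p.1 p.2 : Fin (n + 1) → V))).card
          else 0 := by
    rw [Avec, Finset.sum_filter]
    exact (Fintype.sum_equiv (Fin.consEquiv fun _ : Fin (n + 1) => V) _ _ fun p => rfl).symm
  have hL2 : Avec B K (n + 1) u'
      = ∑ f : Fin n → V, ∑ a : V,
          if stepS (σ f) a = u'
          then Polynomial.X ^ (B.filter fun b => b <+: a :: (σ f).1).card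
               * Polynomial.X ^ (Occs B (List.ofFn f)).card
          else 0 := by
    rw [hL, Fintype.sum_prod_type, Finset.sum_comm]
    refine Finset.sum_congr rfl fun f _ => Finset.sum_congr rfl fun a _ => ?_
    rw [ofFn_cons' a f]
    have hcond : ((a :: List.ofFn f).take K = u'.1) ↔ (stepS (σ f) a = u') := by
      rw [vec_eq_iff]
      show _ ↔ (a :: (List.ofFn f).take K).take K = u'.1
      rw [take_cons_take]
    have hocc : (Occs B (a :: List.ofFn f)).card
        = (B.filter fun b => b <+: a :: (σ f).1).card + (Occs B (List.ofFn f)).card := by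
      rw [occs_cons, prefix_filter_take B hK]
      exact Nat.add_comm _ _
    by_cases hc : stepS (σ f) a = u'
    · rw [if_pos hc, if_pos (hcond.mpr hc), hocc, pow_add]
    · rw [if_neg hc, if_neg (fun hh => hc (hcond.mp hh))]
  rw [hL2, ← Finset.sum_fiberwise Finset.univ σ
    (fun f => ∑ a : V,
      if stepS (σ f) a = u'
      then Polynomial.X ^ (B.filter fun b => b <+: a :: (σ f).1).card
           * Polynomial.X ^ (Occs B (List.ofFn f)).card
      else 0)]
  show _ = ∑ u, TM B K u' u * Avec B K n u
  refine Finset.sum_congr rfl fun u _ => ?_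
  have step1 : (∑ f ∈ Finset.univ.filter (fun f => σ f = u), ∑ a : V,
        if stepS (σ f) a = u'
        then (Polynomial.X : Polynomial ℤ) ^ (B.filter fun b => b <+: a :: (σ f).1).card
             * Polynomial.X ^ (Occs B (List.ofFn f)).card
        else 0)
      = ∑ f ∈ Finset.univ.filter (fun f => σ f = u), ∑ a : V,
        if stepS u a = u'
        then (Polynomial.X : Polynomial ℤ) ^ (B.filter fun b => b <+: a :: u.1).card
             * Polynomial.X ^ (Occs B (List.ofFn f)).card
        else 0 := by
    refine Finset.sum_congr rfl fun f hf => ?_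
    rw [(Finset.mem_filter.mp hf).2]
  rw [step1]
  conv_rhs => rw [TM, Avec, Finset.sum_mul_sum, Finset.sum_comm]
  refine Finset.sum_congr ?_ fun f _ => (Finset.sum_filter _ _).symm
  apply Finset.filter_congr
  intro f _
  rw [hσ]
  exact vec_eq_iff _ _

lemma Avec_pow (B : Finset (List V)) {K : ℕ} (hK : ∀ b ∈ B, b.length ≤ K + 1) (j : ℕ) :
    Avec B K (K + j) = (TM B K) ^ j *ᵥ Avec B K K := by
  induction j with
  | zero => simp [Matrix.one_mulVec]
  | succ j ih =>
    show Avec B K ((K + j) + 1) = _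
    rw [Avec_rec B hK (Nat.le_add_right K j), ih, Matrix.mulVec_mulVec, ← pow_succ']

lemma occCount_eq (B : Finset (List V)) (n m : ℕ) :
    occCount B n m
      = (Finset.univ.filter fun f : Fin n → V => (Occs B (List.ofFn f)).card = m).card := by
  rw [occCount, Nat.card_eq_fintype_card, Fintype.card_subtype]

lemma coeff_occGF (B : Finset (List V)) (n : ℕ) :
    (PowerSeries.coeff n) (occGF B)
      = ∑ f : Fin n → V, Polynomial.X ^ (Occs B (List.ofFn f)).card := by
  classical
  rw [occGF, PowerSeries.coeff_mk]
  rw [← Finset.sum_fiberwise_of_maps_to (t := Finset.range ((n + 1) * B.card + 1))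
      (g := fun f : Fin n → V => (Occs B (List.ofFn f)).card)
      (fun f _ => by
        have h := occ_card_le B (List.ofFn f)
        rw [List.length_ofFn] at h
        exact Finset.mem_range.mpr (Nat.lt_succ_of_le h))
      (fun f => Polynomial.X ^ (Occs B (List.ofFn f)).card)]
  refine Finset.sum_congr rfl fun m hm => ?_
  have hconst : ∀ f ∈ Finset.univ.filter
      (fun f : Fin n → V => (Occs B (List.ofFn f)).card = m),
      (Polynomial.X : Polynomial ℤ) ^ (Occs B (List.ofFn f)).card = Polynomial.X ^ m := by
    intro f hf
    rw [(Finset.mem_filter.mp hf).2]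
  rw [Finset.sum_congr rfl hconst, Finset.sum_const, nsmul_eq_mul, occCount_eq]

lemma coeff_eq_sum_Avec (B : Finset (List V)) {K n : ℕ} (hn : K ≤ n) :
    (PowerSeries.coeff n) (occGF B)
      = ∑ u : List.Vector V K, Avec B K n u := by
  classical
  rw [coeff_occGF]
  rw [← Finset.sum_fiberwise Finset.univ (toState hn)
      (fun f => Polynomial.X ^ (Occs B (List.ofFn f)).card)]
  refine Finset.sum_congr rfl fun u _ => ?_
  rw [Avec]
  congr 1
  apply Finset.filter_congr
  intro f _
  exact vec_eq_iff _ _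

end Machine

/-- `F(s,t)` is rational as a power series in `s` over `ℤ[t]`. -/
theorem stmt13 {V : Type*} [Fintype V] [DecidableEq V]
    (B : Finset (List V)) (hB : ∀ b ∈ B, b ≠ []) :
    ∃ P Q : Polynomial (Polynomial ℤ), Q.coeff 0 = 1 ∧
      (Q : PowerSeries (Polynomial ℤ)) * occGF B = (P : PowerSeries (Polynomial ℤ)) := by
  classical
  set K := B.sup List.length with hKdef
  have hK : ∀ b ∈ B, b.length ≤ K + 1 := fun b hb => (Finset.le_sup hb).trans (Nat.le_succ K)
  set M := TM B K with hM
  set k := Fintype.card (List.Vector V K) with hk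
  have hdeg : M.charpoly.natDegree = k := M.charpoly_natDegree_eq_dim
  have hsum : ∑ i ∈ Finset.range (k + 1), M.charpoly.coeff i • M ^ i = 0 := by
    rw [← Polynomial.aeval_eq_sum_range' (n := k + 1) (by omega) M]
    exact M.aeval_self_charpoly
  have hck : M.charpoly.coeff k = 1 := by
    rw [← hdeg]; exact M.charpoly_monic.coeff_natDegree
  have hMk : M ^ k = -∑ i ∈ Finset.range k, M.charpoly.coeff i • M ^ i := by
    rw [Finset.sum_range_succ, hck, one_smul] at hsum
    exact eq_neg_of_add_eq_zero_right hsum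
  let φ : Matrix (List.Vector V K) (List.Vector V K) (Polynomial ℤ)
      →ₗ[Polynomial ℤ] Polynomial ℤ :=
    { toFun := fun N => ∑ u, (N *ᵥ Avec B K K) u
      map_add' := fun N N' => by
        simp [Matrix.add_mulVec, Finset.sum_add_distrib]
      map_smul' := fun c N => by
        simp [Matrix.smul_mulVec, Finset.mul_sum, smul_eq_mul] }
  have hc : ∀ j : ℕ, (PowerSeries.coeff (K + j)) (occGF B) = φ (M ^ j) := by
    intro j
    rw [coeff_eq_sum_Avec B (Nat.le_add_right K j), Avec_pow B hK j]
    rfl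
  have hrec : ∀ n, K ≤ n → (PowerSeries.coeff (n + k)) (occGF B)
      = ∑ i ∈ Finset.range k,
          (-(M.charpoly.coeff i)) * (PowerSeries.coeff (n + i)) (occGF B) := by
    intro n hn
    obtain ⟨j, rfl⟩ : ∃ j, n = K + j := ⟨n - K, by omega⟩
    have e1 : K + j + k = K + (j + k) := by omega
    rw [e1, hc (j + k)]
    have hMjk : M ^ (j + k)
        = ∑ i ∈ Finset.range k, (-(M.charpoly.coeff i)) • M ^ (j + i) := by
      rw [pow_add, hMk, mul_neg, Finset.mul_sum, ← Finset.sum_neg_distrib]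
      refine Finset.sum_congr rfl fun i _ => ?_
      rw [mul_smul_comm, ← pow_add, ← neg_smul]
    rw [hMjk, map_sum]
    refine Finset.sum_congr rfl fun i hi => ?_
    rw [_root_.map_smul, smul_eq_mul]
    have e2 : K + j + i = K + (j + i) := by omega
    rw [e2, hc (j + i)]
  exact rational_of_linear_rec (occGF B) k K (fun i => -(M.charpoly.coeff i)) hrec
end

section
/- Fix R ≥ 0 and let σ be the (finite) set of nonempty words over V of length at most R+1. Let Φ_R be the multivariate formal power series over ℤ in variables x_u (u ∈ σ) whose coefficient of the monomial ∏_{u ∈ σ} x_u^{n_u} is the number of words w over V such that, for every u ∈ σ, u occurs exactly n_u times as a factor of w. Then Φ_R is rational: there exist multivariate polynomials P, Q ∈ ℤ[x_u : u ∈ σ] with constant coefficient of Q equal to 1 such that Q · Φ_R = P as multivariate formal power series. -/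
/-- The number of occurrences of `u` as a factor of `w`: the number of positions
`i` at which the factor of `w` of length `|u|` starting at `i` equals `u`. -/
noncomputable def factorCount {V : Type*} (u w : List V) : ℕ :=
  Nat.card {i : ℕ // (w.drop i).take u.length = u}

/-- `Φ_R`: the multivariate power series in the variables `x_u`, for `u` a nonempty
word of length at most `R+1`, whose coefficient of `∏ x_u^{n_u}` is the number of
words `w` over `V` in which each such `u` occurs exactly `n_u` times as a factor. -/
noncomputable def PhiR (V : Type*) [Fintype V] (R : ℕ) :
    MvPowerSeries {u : List V // u ≠ [] ∧ u.length ≤ R + 1} ℤ :=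
  fun n => (Nat.card {w : List V //
    ∀ u : {u : List V // u ≠ [] ∧ u.length ≤ R + 1},
      factorCount u.1 w = n u} : ℤ)

open scoped Classical

namespace Stmt14

theorem card_sigma' {ι : Type*} [Fintype ι] (α : ι → Type*) [∀ i, Finite (α i)] :
    Nat.card (Σ i, α i) = ∑ i : ι, Nat.card (α i) := by
  have := fun i => Fintype.ofFinite (α i)
  simp [Nat.card_eq_fintype_card]

variable (V : Type*) [Fintype V] (R : ℕ)

abbrev Sig := {u : List V // u ≠ [] ∧ u.length ≤ R + 1}

abbrev St := {s : List V // s.length ≤ R}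

noncomputable instance : Fintype (St V R) :=
  Set.Finite.fintype (List.finite_length_le V R)

noncomputable instance : Fintype (Sig V R) := by
  have : Finite (Sig V R) := by
    have h := List.finite_length_le V (R + 1)
    exact Finite.of_injective
      (fun u => (⟨u.1, u.2.2⟩ : {l : List V // l.length ≤ R + 1}))
      (fun a b h => by
        apply Subtype.ext
        simpa using h)
  exact Fintype.ofFinite _

variable {V R}

/-- The state of a word: its last `R` letters. -/
def state (w : List V) : List V := w.drop (w.length - R)

lemma state_length (w : List V) : (state (R := R) w).length ≤ R := by
  simp [state]; omega

lemma state_nil : state (R := R) ([] : List V) = [] := by simp [state]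

/-! ### factorCount as a finset card -/

lemma factorCount_eq_card (u w : List V) (hu : u ≠ []) :
    factorCount u w =
      ((Finset.range w.length).filter fun i => (w.drop i).take u.length = u).card := by
  have hlen : ∀ i : ℕ, (w.drop i).take u.length = u → i < w.length := by
    intro i hi
    by_contra h
    push_neg at h
    rw [List.drop_eq_nil_of_le h] at hi
    simp only [List.take_nil] at hi
    subst hi
    simp at hu
  have h1 : {i : ℕ | (w.drop i).take u.length = u} =
      ↑((Finset.range w.length).filter fun i => (w.drop i).take u.length = u) := by
    ext i
    simp only [Set.mem_setOf_eq, Finset.coe_filter, Finset.mem_range]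
    exact ⟨fun h => ⟨hlen i h, h⟩, fun h => h.2⟩
  have := Nat.card_coe_set_eq {i : ℕ | (w.drop i).take u.length = u}
  rw [factorCount]
  rw [show {i : ℕ // (w.drop i).take u.length = u} =
    ↥{i : ℕ | (w.drop i).take u.length = u} from rfl, this, h1, Set.ncard_coe_finset]

lemma factorCount_nil (u : List V) (hu : u ≠ []) : factorCount u [] = 0 := by
  rw [factorCount_eq_card u [] hu]; simp

lemma occ_le {u w : List V} {i : ℕ} (hu : u ≠ [])
    (h : (w.drop i).take u.length = u) : i + u.length ≤ w.length := by
  have h0 := congrArg List.length h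
  simp only [List.length_take, List.length_drop] at h0
  have h1 : 0 < u.length := List.length_pos_iff.mpr hu
  omega

lemma cond_concat {u w : List V} (a : V) {i : ℕ} (hi : i + u.length ≤ w.length) :
    ((w ++ [a]).drop i).take u.length = (w.drop i).take u.length := by
  rw [List.drop_append_of_le_length (by omega)]
  rw [List.take_append_of_le_length (by simp; omega)]

lemma factorCount_concat (u w : List V) (a : V) (hu : u ≠ []) :
    factorCount u (w ++ [a]) =
      factorCount u w + (if u <:+ w ++ [a] then 1 else 0) := by
  have hu1 : 0 < u.length := List.length_pos_iff.mpr hu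
  rw [factorCount_eq_card u (w ++ [a]) hu, factorCount_eq_card u w hu]
  simp only [List.length_append, List.length_singleton]
  set p := w.length + 1 - u.length with hp
  have hcase2 : ∀ i : ℕ, i + u.length = w.length + 1 →
      (((w ++ [a]).drop i).take u.length = u ↔ u <:+ w ++ [a]) := by
    intro i hi
    have hdl : ((w ++ [a]).drop i).length = u.length := by simp; omega
    rw [List.take_of_length_le (le_of_eq hdl)]
    rw [List.suffix_iff_eq_drop]
    constructor
    · intro h; rw [← h]; congr 1; simp; omega
    · intro h
      rw [h]; congr 1; simp; omega
  have hcase3 : ∀ i : ℕ, w.length + 1 < i + u.length → i < w.length + 1 →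
      ¬ ((w ++ [a]).drop i).take u.length = u := by
    intro i h1 h2 h
    have h0 := congrArg List.length h
    simp only [List.length_take, List.length_drop, List.length_append,
      List.length_singleton] at h0
    omega
  by_cases hs : u <:+ w ++ [a]
  · have hul : u.length ≤ w.length + 1 := by
      have := hs.length_le; simpa using this
    rw [if_pos hs]
    have hpnot : p ∉ (Finset.range w.length).filter
        fun i => (w.drop i).take u.length = u := by
      intro hmem
      rw [Finset.mem_filter] at hmem
      have := occ_le hu hmem.2
      omega
    have hins : (Finset.range (w.length + 1)).filter
          (fun i => ((w ++ [a]).drop i).take u.length = u) =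
        insert p ((Finset.range w.length).filter
          fun i => (w.drop i).take u.length = u) := by
      ext i
      simp only [Finset.mem_filter, Finset.mem_range, Finset.mem_insert]
      constructor
      · rintro ⟨h1, h2⟩
        by_cases hle : i + u.length ≤ w.length
        · right
          rw [cond_concat a hle] at h2
          exact ⟨by omega, h2⟩
        · left
          by_cases heq : i + u.length = w.length + 1
          · omega
          · exact absurd h2 (hcase3 i (by omega) h1)
      · rintro (h | ⟨h1, h2⟩)
        · subst h
          refine ⟨by omega, ?_⟩
          rw [hcase2 p (by omega)]
          exact hs
        · have := occ_le hu h2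
          refine ⟨by omega, ?_⟩
          rw [cond_concat a this]
          exact h2
    rw [hins, Finset.card_insert_of_notMem hpnot]
  · rw [if_neg hs, add_zero]
    congr 1
    ext i
    simp only [Finset.mem_filter, Finset.mem_range]
    constructor
    · rintro ⟨h1, h2⟩
      by_cases hle : i + u.length ≤ w.length
      · rw [cond_concat a hle] at h2
        exact ⟨by omega, h2⟩
      · by_cases heq : i + u.length = w.length + 1
        · rw [hcase2 i heq] at h2
          exact absurd h2 hs
        · exact absurd h2 (hcase3 i (by omega) h1)
    · rintro ⟨h1, h2⟩
      have := occ_le hu h2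
      refine ⟨by omega, ?_⟩
      rw [cond_concat a this]
      exact h2

/-! ### profiles and transitions -/

lemma suffix_drop_iff {u l : List V} {k : ℕ} (h : u.length + k ≤ l.length) :
    u <:+ l.drop k ↔ u <:+ l := by
  constructor
  · intro hs
    exact hs.trans (List.drop_suffix k l)
  · intro hs
    rw [List.suffix_iff_eq_drop] at hs
    rw [hs]
    exact List.drop_suffix_drop_left l (by omega)

/-- The occurrence profile of a word. -/
noncomputable def profile (w : List V) : Sig V R →₀ ℕ :=
  Finsupp.equivFunOnFinite.symm fun u => factorCount u.1 w

lemma profile_apply (w : List V) (u : Sig V R) :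
    profile (R := R) w u = factorCount u.1 w := rfl

lemma profile_nil : profile (R := R) ([] : List V) = 0 := by
  ext u
  rw [profile_apply, factorCount_nil u.1 u.2.1]
  rfl

/-- Monomial exponent picked up when appending `a` to a word with state `t`. -/
noncomputable def mu (t : List V) (a : V) : Sig V R →₀ ℕ :=
  Finsupp.equivFunOnFinite.symm fun u => if u.1 <:+ t ++ [a] then 1 else 0

lemma mu_apply (t : List V) (a : V) (u : Sig V R) :
    mu (R := R) t a u = if u.1 <:+ t ++ [a] then 1 else 0 := rfl

lemma mu_ne_zero (t : List V) (a : V) : mu (R := R) t a ≠ 0 := by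
  intro h
  have h2 : mu (R := R) t a ⟨[a], by simp, by simpa using Nat.succ_le_succ (Nat.zero_le R)⟩ = 0 := by rw [h]; rfl
  rw [mu_apply] at h2
  rw [if_pos (List.suffix_append t [a])] at h2
  simp at h2

lemma state_concat_aux (w : List V) (a : V) :
    state (R := R) w ++ [a] = (w ++ [a]).drop (w.length - R) := by
  rw [List.drop_append_of_le_length (by omega)]
  rfl

lemma state_concat (w : List V) (a : V) :
    state (R := R) (w ++ [a]) = state (R := R) (state (R := R) w ++ [a]) := by
  rw [state_concat_aux]
  simp only [state, List.drop_drop]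
  congr 1
  simp
  omega

lemma suffix_state_iff (w : List V) (a : V) (u : Sig V R) :
    u.1 <:+ state (R := R) w ++ [a] ↔ u.1 <:+ w ++ [a] := by
  rcases le_or_gt w.length R with h | h
  · rw [state, show w.length - R = 0 by omega, List.drop_zero]
  · rw [state_concat_aux]
    apply suffix_drop_iff
    have := u.2.2
    simp
    omega

lemma profile_concat (w : List V) (a : V) :
    profile (R := R) (w ++ [a]) =
      profile (R := R) w + mu (R := R) (state (R := R) w) a := by
  ext u
  rw [Finsupp.add_apply, profile_apply, profile_apply, mu_apply,
    factorCount_concat u.1 w a u.2.1]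
  exact congrArg (fun z => factorCount u.1 w + z)
    (if_congr (suffix_state_iff w a u).symm rfl rfl)

/-! ### length and finiteness -/

lemma length_eq_sum (w : List V) : w.length = ∑ a : V, factorCount [a] w := by
  rcases w with _ | ⟨b, w'⟩
  · simp [factorCount_nil]
  · set w := b :: w' with hw
    have key : ∀ a : V, factorCount [a] w =
        ((Finset.range w.length).filter fun i => w.getD i b = a).card := by
      intro a
      rw [factorCount_eq_card [a] w (by simp)]
      congr 1
      apply Finset.filter_congr
      intro i hi
      rw [Finset.mem_range] at hi
      have hdrop := List.drop_eq_getElem_cons (l := w) hi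
      rw [show ([a] : List V).length = 0 + 1 by simp, hdrop, List.take_succ_cons,
        List.take_zero]
      simp [List.getD_eq_getElem, hi]
    simp only [key]
    rw [← Finset.card_eq_sum_card_fiberwise (f := fun i => w.getD i b)
      (t := Finset.univ) (fun x _ => Finset.mem_univ _)]
    simp

lemma length_le_of_profile {w : List V} {n : Sig V R →₀ ℕ}
    (h : profile (R := R) w = n) : w.length ≤ ∑ u : Sig V R, n u := by
  have h1 : ∀ a : V, factorCount [a] w =
      n ⟨[a], by simp, by simpa using Nat.succ_le_succ (Nat.zero_le R)⟩ := by
    intro a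
    rw [← h, profile_apply]
  calc w.length = ∑ a : V, factorCount [a] w := length_eq_sum w
    _ = ∑ a : V, n ⟨[a], by simp, by simpa using Nat.succ_le_succ (Nat.zero_le R)⟩ := by
        simp [h1]
    _ = ∑ u ∈ Finset.univ.image (fun a : V =>
        (⟨[a], by simp, by simpa using Nat.succ_le_succ (Nat.zero_le R)⟩ : Sig V R)), n u := by
        rw [Finset.sum_image]
        intro x _ y _ hxy
        simpa using congrArg Subtype.val hxy
    _ ≤ ∑ u : Sig V R, n u := Finset.sum_le_sum_of_subset (Finset.subset_univ _)

lemma finite_profile (P : List V → Prop) (n : Sig V R →₀ ℕ) :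
    Finite {w : List V // P w ∧ profile (R := R) w = n} := by
  have h : {w : List V | P w ∧ profile (R := R) w = n} ⊆
      {w : List V | w.length ≤ ∑ u : Sig V R, n u} := by
    intro w hw
    exact length_le_of_profile hw.2
  have := ((List.finite_length_le V _).subset h).to_subtype
  exact this

/-! ### the main recursion -/

lemma eq_nil_of_profile_zero (w : List V) (h : profile (R := R) w = 0) : w = [] := by
  rcases w with _ | ⟨b, w'⟩
  · rfl
  · exfalso
    have h1 : profile (R := R) (b :: w')
        ⟨[b], by simp, by simpa using Nat.succ_le_succ (Nat.zero_le R)⟩ = 0 := by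
      rw [h]; rfl
    rw [profile_apply] at h1
    rw [factorCount_eq_card _ _ (by simp)] at h1
    have hmem : 0 ∈ (Finset.range (b :: w').length).filter
        (fun i => ((b :: w').drop i).take ([b] : List V).length = [b]) := by
      rw [Finset.mem_filter, Finset.mem_range]
      exact ⟨by simp, by simp⟩
    exact Finset.card_ne_zero_of_mem hmem h1

lemma finsupp_eq_sub {a b n : Sig V R →₀ ℕ} (h : a + b = n) : a = n - b := by
  ext u
  have h1 : a u + b u = n u := by rw [← Finsupp.add_apply, h]
  rw [Finsupp.tsub_apply]
  omega

lemma finite_fiber (P : List V → Prop) (n : Sig V R →₀ ℕ) (m : Sig V R →₀ ℕ)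
    : Finite {w : List V // P w ∧ profile (R := R) w + m = n} := by
  have := finite_profile (R := R) P (n - m)
  exact Finite.of_injective
    (fun w => (⟨w.1, w.2.1, finsupp_eq_sub w.2.2⟩ :
      {w : List V // P w ∧ profile (R := R) w = n - m}))
    (fun x y hxy => Subtype.ext (by simpa using congrArg Subtype.val hxy))

lemma card_rec (s : List V) (n : Sig V R →₀ ℕ) :
    Nat.card {w : List V // state (R := R) w = s ∧ profile (R := R) w = n} =
      (if s = [] ∧ n = 0 then 1 else 0) +
        ∑ t : St V R, ∑ a : V,
          if state (R := R) (t.1 ++ [a]) = s ∧ mu (R := R) t.1 a ≤ n then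
            Nat.card {w : List V // state (R := R) w = t.1 ∧
              profile (R := R) w = n - mu (R := R) t.1 a}
          else 0 := by
  by_cases h0 : s = [] ∧ n = 0
  · obtain ⟨rfl, rfl⟩ := h0
    rw [if_pos ⟨rfl, rfl⟩]
    have h1 : Nat.card {w : List V //
        state (R := R) w = [] ∧ profile (R := R) w = 0} = 1 := by
      have : Unique {w : List V // state (R := R) w = [] ∧ profile (R := R) w = 0} :=
        ⟨⟨⟨[], state_nil, profile_nil⟩⟩,
          fun w => Subtype.ext (eq_nil_of_profile_zero w.1 w.2.2)⟩
      exact Nat.card_unique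
    rw [h1]
    have hz : (∑ t : St V R, ∑ a : V,
        if state (R := R) (t.1 ++ [a]) = [] ∧ mu (R := R) t.1 a ≤ 0 then
          Nat.card {w : List V // state (R := R) w = t.1 ∧
            profile (R := R) w = 0 - mu (R := R) t.1 a}
        else 0) = 0 := by
      apply Finset.sum_eq_zero
      intro t _
      apply Finset.sum_eq_zero
      intro a _
      rw [if_neg]
      rintro ⟨-, hle⟩
      exact mu_ne_zero t.1 a (le_antisymm hle zero_le)
    rw [hz]
  · rw [if_neg h0, zero_add]
    set F : St V R × V → Type _ := fun p =>
      {w' : List V // state (R := R) w' = p.1.1 ∧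
        state (R := R) (p.1.1 ++ [p.2]) = s ∧
        profile (R := R) w' + mu (R := R) p.1.1 p.2 = n} with hF
    have hfin : ∀ p, Finite (F p) := by
      intro p
      have := finite_fiber (R := R)
        (fun w' => state (R := R) w' = p.1.1 ∧ state (R := R) (p.1.1 ++ [p.2]) = s)
        n (mu (R := R) p.1.1 p.2)
      exact Finite.of_injective
        (fun w => (⟨w.1, ⟨w.2.1, w.2.2.1⟩, w.2.2.2⟩ :
          {w' : List V // (state (R := R) w' = p.1.1 ∧
            state (R := R) (p.1.1 ++ [p.2]) = s) ∧
            profile (R := R) w' + mu (R := R) p.1.1 p.2 = n}))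
        (fun x y hxy => Subtype.ext (by simpa using congrArg Subtype.val hxy))
    have hfin2 := hfin
    set f : (Σ p : St V R × V, F p) →
        {w : List V // state (R := R) w = s ∧ profile (R := R) w = n} :=
      fun x => ⟨x.2.1 ++ [x.1.2], by
          rw [state_concat, x.2.2.1]; exact x.2.2.2.1, by
          rw [profile_concat, x.2.2.1]; exact x.2.2.2.2⟩ with hf
    have hbij : Function.Bijective f := by
      constructor
      · rintro ⟨⟨⟨t, ht⟩, a⟩, ⟨w', hw1, hw2, hw3⟩⟩ ⟨⟨⟨t', ht'⟩, a'⟩, ⟨v', hv1, hv2, hv3⟩⟩ h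
        have h1 : w' ++ [a] = v' ++ [a'] := congrArg Subtype.val h
        obtain ⟨rfl, h3⟩ := List.append_inj' h1 rfl
        have : a = a' := by simpa using h3
        subst this
        have : t = t' := by simpa using hw1.symm.trans hv1
        subst this
        rfl
      · rintro ⟨w, hw1, hw2⟩
        have hne : w ≠ [] := by
          rintro rfl
          exact h0 ⟨by rw [← hw1, state_nil], by rw [← hw2, profile_nil]⟩
        have hlast : w.dropLast ++ [w.getLast hne] = w :=
          List.dropLast_append_getLast hne
        refine ⟨⟨⟨⟨state (R := R) w.dropLast, state_length _⟩, w.getLast hne⟩,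
          ⟨w.dropLast, rfl, ?_, ?_⟩⟩, ?_⟩
        · rw [← state_concat, hlast]; exact hw1
        · rw [← profile_concat, hlast]; exact hw2
        · exact Subtype.ext hlast
    rw [← Nat.card_congr (Equiv.ofBijective f hbij)]
    rw [card_sigma' F]
    rw [Fintype.sum_prod_type]
    apply Finset.sum_congr rfl
    intro t _
    apply Finset.sum_congr rfl
    intro a _
    by_cases hc : state (R := R) (t.1 ++ [a]) = s ∧ mu (R := R) t.1 a ≤ n
    · rw [if_pos hc]
      apply Nat.card_congr
      apply Equiv.subtypeEquivRight
      intro w'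
      constructor
      · rintro ⟨h1, h2, h3⟩
        exact ⟨h1, finsupp_eq_sub h3⟩
      · rintro ⟨h1, h2⟩
        refine ⟨h1, hc.1, ?_⟩
        rw [h2]
        exact tsub_add_cancel_of_le hc.2
    · rw [if_neg hc]
      have : IsEmpty (F (t, a)) := by
        constructor
        rintro ⟨w', h1, h2, h3⟩
        exact hc ⟨h2, h3 ▸ le_add_self⟩
      exact Nat.card_of_isEmpty

lemma card_partition (n : Sig V R →₀ ℕ) :
    Nat.card {w : List V // profile (R := R) w = n} =
      ∑ s : St V R, Nat.card {w : List V //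
        state (R := R) w = s.1 ∧ profile (R := R) w = n} := by
  have hfin : ∀ s : St V R, Finite {w : List V //
      state (R := R) w = s.1 ∧ profile (R := R) w = n} := by
    intro s
    have := finite_fiber (R := R) (fun w => state (R := R) w = s.1) n 0
    exact Finite.of_injective
      (fun w => (⟨w.1, w.2.1, by rw [add_zero]; exact w.2.2⟩ :
        {w : List V // state (R := R) w = s.1 ∧ profile (R := R) w + 0 = n}))
      (fun x y hxy => Subtype.ext (by simpa using congrArg Subtype.val hxy))
  set f : (Σ s : St V R, {w : List V //
      state (R := R) w = s.1 ∧ profile (R := R) w = n}) →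
      {w : List V // profile (R := R) w = n} :=
    fun x => ⟨x.2.1, x.2.2.2⟩ with hf
  have hbij : Function.Bijective f := by
    constructor
    · rintro ⟨⟨t, ht⟩, ⟨w, hw1, hw2⟩⟩ ⟨⟨t', ht'⟩, ⟨v, hv1, hv2⟩⟩ h
      have h1 : w = v := congrArg Subtype.val h
      subst h1
      have : t = t' := by simpa using hw1.symm.trans hv1
      subst this
      rfl
    · rintro ⟨w, hw⟩
      exact ⟨⟨⟨state (R := R) w, state_length _⟩, ⟨w, rfl, hw⟩⟩, rfl⟩
  rw [← Nat.card_congr (Equiv.ofBijective f hbij), card_sigma']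

/-! ### power series and matrices -/

section Final

variable (V R)

/-- The generating function of words with a given state. -/
noncomputable def Gs (s : St V R) : MvPowerSeries (Sig V R) ℤ :=
  fun n => (Nat.card {w : List V //
    state (R := R) w = s.1 ∧ profile (R := R) w = n} : ℤ)

lemma coeff_Gs (s : St V R) (n : Sig V R →₀ ℕ) :
    MvPowerSeries.coeff n (Gs V R s) =
      (Nat.card {w : List V //
        state (R := R) w = s.1 ∧ profile (R := R) w = n} : ℤ) := rfl

/-- Transfer matrix. -/
noncomputable def Mmat : Matrix (St V R) (St V R) (MvPolynomial (Sig V R) ℤ) :=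
  fun s t => ∑ a : V, if state (R := R) (t.1 ++ [a]) = s.1 then
    MvPolynomial.monomial (mu (R := R) t.1 a) 1 else 0

noncomputable def Amat : Matrix (St V R) (St V R) (MvPolynomial (Sig V R) ℤ) :=
  1 - Mmat V R

lemma coe_Mmat (s t : St V R) :
    ((Mmat V R s t : MvPolynomial (Sig V R) ℤ) : MvPowerSeries (Sig V R) ℤ) =
      ∑ a : V, if state (R := R) (t.1 ++ [a]) = s.1 then
        MvPowerSeries.monomial (mu (R := R) t.1 a) 1 else 0 := by
  rw [← MvPolynomial.coeToMvPowerSeries.ringHom_apply, Mmat, map_sum]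
  apply Finset.sum_congr rfl
  intro a _
  split_ifs
  · rw [MvPolynomial.coeToMvPowerSeries.ringHom_apply, MvPolynomial.coe_monomial]
  · exact map_zero _

lemma Gs_eq (s : St V R) :
    Gs V R s = (if s.1 = [] then 1 else 0) +
      ∑ t : St V R,
        ((Mmat V R s t : MvPolynomial (Sig V R) ℤ) : MvPowerSeries (Sig V R) ℤ) *
          Gs V R t := by
  apply MvPowerSeries.ext
  intro n
  rw [map_add, map_sum, coeff_Gs, card_rec s.1 n]
  push_cast
  congr 1
  · by_cases hs : s.1 = []
    · rw [if_pos hs, MvPowerSeries.coeff_one]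
      by_cases hn : n = 0
      · rw [if_pos ⟨hs, hn⟩, if_pos hn]
      · rw [if_neg (fun h => hn h.2), if_neg hn]
    · rw [if_neg hs, map_zero, if_neg (fun h => hs h.1)]
  · apply Finset.sum_congr rfl
    intro t _
    rw [coe_Mmat, Finset.sum_mul, map_sum]
    apply Finset.sum_congr rfl
    intro a _
    by_cases hc : state (R := R) (t.1 ++ [a]) = s.1
    · rw [if_pos hc, MvPowerSeries.coeff_monomial_mul]
      by_cases hle : mu (R := R) t.1 a ≤ n
      · rw [if_pos ⟨hc, hle⟩, if_pos hle, one_mul, coeff_Gs]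
      · rw [if_neg (fun h => hle h.2), if_neg hle]
    · rw [if_neg (fun h => hc h.1), if_neg hc, zero_mul, map_zero]

lemma Phi_eq : PhiR V R = ∑ s : St V R, Gs V R s := by
  apply MvPowerSeries.ext
  intro n
  rw [map_sum]
  have h0 : MvPowerSeries.coeff n (PhiR V R) =
      (Nat.card {w : List V // ∀ u : Sig V R, factorCount u.1 w = n u} : ℤ) := rfl
  rw [h0]
  have hiff : ∀ w : List V,
      (∀ u : Sig V R, factorCount u.1 w = n u) ↔ profile (R := R) w = n := by
    intro w
    constructor
    · intro h; ext u; rw [profile_apply, h]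
    · intro h u; rw [← h, profile_apply]
  rw [Nat.card_congr (Equiv.subtypeEquivRight hiff), card_partition n]
  push_cast
  apply Finset.sum_congr rfl
  intro t _
  rw [coeff_Gs]

lemma hM0 (s t : St V R) : MvPolynomial.constantCoeff (Mmat V R s t) = 0 := by
  rw [Mmat, map_sum]
  apply Finset.sum_eq_zero
  intro a _
  split_ifs
  · rw [MvPolynomial.constantCoeff_monomial, if_neg (mu_ne_zero t.1 a)]
  · exact map_zero _

end Final

theorem main {V : Type*} [Fintype V] (R : ℕ) :
    ∃ P Q : MvPolynomial {u : List V // u ≠ [] ∧ u.length ≤ R + 1} ℤ,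
      MvPolynomial.coeff 0 Q = 1 ∧
        (Q : MvPowerSeries {u : List V // u ≠ [] ∧ u.length ≤ R + 1} ℤ) * PhiR V R =
          (P : MvPowerSeries {u : List V // u ≠ [] ∧ u.length ≤ R + 1} ℤ) := by
  set φ := (MvPolynomial.coeToMvPowerSeries.ringHom :
    MvPolynomial (Sig V R) ℤ →+* MvPowerSeries (Sig V R) ℤ) with hφ
  set ep : St V R → MvPolynomial (Sig V R) ℤ := fun t => if t.1 = [] then 1 else 0 with hep
  set e : St V R → MvPowerSeries (Sig V R) ℤ := fun t => if t.1 = [] then 1 else 0 with he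
  refine ⟨∑ s : St V R, ((Amat V R).adjugate.mulVec ep) s, (Amat V R).det, ?_, ?_⟩
  · -- constant coefficient of the determinant
    have h1 : MvPolynomial.coeff 0 ((Amat V R).det) =
        MvPolynomial.constantCoeff ((Amat V R).det) := rfl
    rw [h1, RingHom.map_det, RingHom.mapMatrix_apply]
    have h2 : (Amat V R).map MvPolynomial.constantCoeff = 1 := by
      ext s t
      rw [Matrix.map_apply, Amat, Matrix.sub_apply, map_sub, hM0, sub_zero]
      by_cases hst : s = t <;> simp [Matrix.one_apply, hst]
    rw [h2, Matrix.det_one]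
  · -- the rational identity
    set A' := (Amat V R).map φ with hA'
    have hAG : A'.mulVec (Gs V R) = e := by
      funext s
      have h1 : ∀ t, A' s t =
          (if s = t then (1 : MvPowerSeries (Sig V R) ℤ) else 0) -
            ((Mmat V R s t : MvPolynomial (Sig V R) ℤ) :
              MvPowerSeries (Sig V R) ℤ) := by
        intro t
        rw [hA', Matrix.map_apply, Amat, Matrix.sub_apply, map_sub,
          MvPolynomial.coeToMvPowerSeries.ringHom_apply]
        congr 1
        rw [Matrix.one_apply]
        split_ifs <;> simp
      simp only [Matrix.mulVec, dotProduct, h1, sub_mul, ite_mul, one_mul,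
        zero_mul, Finset.sum_sub_distrib]
      rw [Finset.sum_ite_eq Finset.univ s (fun t => Gs V R t)]
      rw [if_pos (Finset.mem_univ s)]
      rw [Gs_eq V R s]
      exact add_sub_cancel_right _ _
    have hsmul : φ (Amat V R).det • Gs V R = ((Amat V R).adjugate.map φ).mulVec e := by
      have hadj : (Amat V R).adjugate.map φ = A'.adjugate := by
        have := RingHom.map_adjugate φ (Amat V R)
        rw [RingHom.mapMatrix_apply, RingHom.mapMatrix_apply] at this
        rw [this, hA']
      rw [← hAG, Matrix.mulVec_mulVec, hadj, Matrix.adjugate_mul,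
        RingHom.map_det, RingHom.mapMatrix_apply, ← hA', Matrix.smul_mulVec,
        Matrix.one_mulVec]
    rw [← MvPolynomial.coeToMvPowerSeries.ringHom_apply, ← hφ, Phi_eq, Finset.mul_sum]
    rw [← MvPolynomial.coeToMvPowerSeries.ringHom_apply (φ := ∑ s : St V R, _), ← hφ]
    rw [map_sum]
    have hfe : ∀ t : St V R, φ (ep t) = e t := by
      intro t
      by_cases h : (t : List V) = [] <;> simp [hep, he, h]
    calc ∑ s : St V R, φ (Amat V R).det * Gs V R s
        = ∑ s : St V R, (φ (Amat V R).det • Gs V R) s := by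
          apply Finset.sum_congr rfl
          intro s _
          rw [Pi.smul_apply, smul_eq_mul]
      _ = ∑ s : St V R, ((Amat V R).adjugate.map φ).mulVec e s := by rw [hsmul]
      _ = ∑ s : St V R, φ ((Amat V R).adjugate.mulVec ep s) := by
          apply Finset.sum_congr rfl
          intro s _
          rw [Matrix.mulVec, Matrix.mulVec, dotProduct, dotProduct, map_sum]
          apply Finset.sum_congr rfl
          intro t _
          rw [map_mul, Matrix.map_apply, hfe]

end Stmt14

/-- `Φ_R` is a rational multivariate power series. -/
theorem stmt14 {V : Type*} [Fintype V] (R : ℕ) :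
    ∃ P Q : MvPolynomial {u : List V // u ≠ [] ∧ u.length ≤ R + 1} ℤ,
      MvPolynomial.coeff 0 Q = 1 ∧
        (Q : MvPowerSeries {u : List V // u ≠ [] ∧ u.length ≤ R + 1} ℤ) * PhiR V R =
          (P : MvPowerSeries {u : List V // u ≠ [] ∧ u.length ≤ R + 1} ℤ) := by
  exact Stmt14.main R
end

section
/- Let p ∈ (0,1) and let μ be the product probability measure on ℕ → Bool in which each coordinate independently equals true with probability p. For a pattern P : Fin 3 → Bool let τ_P(ω) be the least n such that ω(n+j) = P(j) for all j < 3 (with τ_P(ω) = ∞ if no such n exists). Let A be the pattern (true, true, false) (HHT) and let B' be the pattern (true, false, false) (HTT). Then μ{ω : τ_A(ω) < τ_{B'}(ω)} = p/(p² − p + 1) and μ{ω : τ_{B'}(ω) < τ_A(ω)} = (1−p)²/(p² − p + 1). In particular, for p = 1/2 these probabilities are 2/3 and 1/3. -/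
open scoped ENNReal

/-- The first time the length-3 pattern `P` occurs in the flip sequence `ω`
(`⊤` if it never occurs). -/
noncomputable def hitTime (P : Fin 3 → Bool) (ω : ℕ → Bool) : ℕ∞ :=
  sInf ((fun n : ℕ => (n : ℕ∞)) '' {n : ℕ | ∀ j : Fin 3, ω (n + (j : ℕ)) = P j})

namespace Penney

def occA (ω : ℕ → Bool) (n : ℕ) : Prop := ω n = true ∧ ω (n+1) = true ∧ ω (n+2) = false
def occB (ω : ℕ → Bool) (n : ℕ) : Prop := ω n = true ∧ ω (n+1) = false ∧ ω (n+2) = false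

lemma occA_iff (ω : ℕ → Bool) (n : ℕ) :
    (∀ j : Fin 3, ω (n + (j : ℕ)) = ![true,true,false] j) ↔ occA ω n := by
  constructor
  · intro h
    exact ⟨by simpa using h 0, by simpa using h 1, by simpa using h 2⟩
  · rintro ⟨h0, h1, h2⟩ j
    fin_cases j <;> simpa

lemma occB_iff (ω : ℕ → Bool) (n : ℕ) :
    (∀ j : Fin 3, ω (n + (j : ℕ)) = ![true,false,false] j) ↔ occB ω n := by
  constructor
  · intro h
    exact ⟨by simpa using h 0, by simpa using h 1, by simpa using h 2⟩
  · rintro ⟨h0, h1, h2⟩ j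
    fin_cases j <;> simpa

lemma hitTime_le {P : Fin 3 → Bool} {ω : ℕ → Bool} {n : ℕ}
    (h : ∀ j : Fin 3, ω (n + (j : ℕ)) = P j) : hitTime P ω ≤ (n : ℕ∞) :=
  sInf_le ⟨n, h, rfl⟩

lemma lt_hitTime {P : Fin 3 → Bool} {ω : ℕ → Bool} {n : ℕ}
    (h : ∀ m ≤ n, ¬ ∀ j : Fin 3, ω (m + (j : ℕ)) = P j) : (n : ℕ∞) < hitTime P ω := by
  have h1 : ((n+1 : ℕ) : ℕ∞) ≤ hitTime P ω := by
    apply le_sInf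
    rintro x ⟨m, hm, rfl⟩
    have : n < m := lt_of_not_ge fun hle => h m hle hm
    show ((n+1 : ℕ) : ℕ∞) ≤ (m : ℕ∞)
    exact_mod_cast this
  exact lt_of_lt_of_le (by exact_mod_cast Nat.lt_succ_self n) h1

lemma exists_occ {P : Fin 3 → Bool} {ω : ℕ → Bool} (h : hitTime P ω ≠ ⊤) :
    ∃ n, ∀ j : Fin 3, ω (n + (j : ℕ)) = P j := by
  by_contra hc
  push_neg at hc
  have he : {n : ℕ | ∀ j : Fin 3, ω (n + (j : ℕ)) = P j} = ∅ := by
    ext n; simpa using hc n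
  apply h
  rw [hitTime, he]
  simp

/-! ### Classification lemmas -/

variable {ω : ℕ → Bool} {a k : ℕ}

/-- infinite alternation `T^a (HT)^∞` -/
lemma trueIff_alt (h0 : ∀ i < a, ω i = false) (h1 : ω a = true)
    (hodd : ∀ j, ω (a+2*j+1) = false) (hevn : ∀ j, ω (a+2*j+2) = true) :
    ∀ m, (ω m = true ↔ (a ≤ m ∧ (m - a) % 2 = 0)) := by
  intro m
  constructor
  · intro ht
    rcases lt_or_ge m a with h | h
    · rw [h0 m h] at ht; simp at ht
    refine ⟨h, ?_⟩
    by_contra hc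
    have hj : m = a + 2*((m-a)/2) + 1 := by omega
    rw [hj, hodd] at ht; simp at ht
  · rintro ⟨ha, hev⟩
    rcases Nat.eq_or_lt_of_le ha with h | h
    · rw [← h]; exact h1
    · have hj : m = a + 2*((m-a)/2 - 1) + 2 := by omega
      rw [hj]; exact hevn _

lemma noA_alt (h0 : ∀ i < a, ω i = false) (h1 : ω a = true)
    (hodd : ∀ j, ω (a+2*j+1) = false) (hevn : ∀ j, ω (a+2*j+2) = true) :
    ∀ n, ¬ occA ω n := by
  rintro n ⟨t1, t2, _⟩
  have c1 := (trueIff_alt h0 h1 hodd hevn n).mp t1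
  have c2 := (trueIff_alt h0 h1 hodd hevn (n+1)).mp t2
  omega

lemma noB_alt (h0 : ∀ i < a, ω i = false) (h1 : ω a = true)
    (hodd : ∀ j, ω (a+2*j+1) = false) (hevn : ∀ j, ω (a+2*j+2) = true) :
    ∀ n, ¬ occB ω n := by
  rintro n ⟨t1, _, t3⟩
  have c1 := (trueIff_alt h0 h1 hodd hevn n).mp t1
  have c3 := (trueIff_alt h0 h1 hodd hevn (n+2)).mpr ⟨by omega, by omega⟩
  rw [t3] at c3; simp at c3

/-- B-win configuration `T^a (HT)^{k+1} T` -/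
lemma trueIff_B (h0 : ∀ i < a, ω i = false) (h1 : ω a = true)
    (h2 : ∀ j < k, ω (a+2*j+1) = false ∧ ω (a+2*j+2) = true)
    (hA1 : ω (a+2*k+1) = false) (hB2 : ω (a+2*k+2) = false) :
    ∀ m ≤ a+2*k+2, (ω m = true ↔ (a ≤ m ∧ (m - a) % 2 = 0 ∧ m ≤ a+2*k)) := by
  intro m hm
  constructor
  · intro ht
    rcases lt_or_ge m a with h | h
    · rw [h0 m h] at ht; simp at ht
    refine ⟨h, ?_, ?_⟩
    · by_contra hodd
      rcases lt_or_ge m (a+2*k+1) with hlt | hge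
      · have hj : m = a + 2*((m-a)/2) + 1 := by omega
        have := (h2 ((m-a)/2) (by omega)).1
        rw [hj, this] at ht; simp at ht
      · have hj : m = a+2*k+1 := by omega
        rw [hj, hA1] at ht; simp at ht
    · by_contra hgt
      rcases lt_or_ge m (a+2*k+2) with hlt | hge
      · have hj : m = a+2*k+1 := by omega
        rw [hj, hA1] at ht; simp at ht
      · have hj : m = a+2*k+2 := by omega
        rw [hj, hB2] at ht; simp at ht
  · rintro ⟨ha, hev, hle⟩
    rcases Nat.eq_or_lt_of_le ha with h | h
    · rw [← h]; exact h1
    · have hj : m = a + 2*((m-a)/2 - 1) + 2 := by omega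
      rw [hj]; exact (h2 ((m-a)/2 - 1) (by omega)).2

/-- prefix of an A-win configuration: `T^a (HT)^k HH` -/
lemma trueIff_Apre (h0 : ∀ i < a, ω i = false) (h1 : ω a = true)
    (h2 : ∀ j < k, ω (a+2*j+1) = false ∧ ω (a+2*j+2) = true)
    (hA1 : ω (a+2*k+1) = true) :
    ∀ m < a+2*k+2, (ω m = true ↔ (a ≤ m ∧ ((m - a) % 2 = 0 ∨ m = a+2*k+1))) := by
  intro m hm
  constructor
  · intro ht
    rcases lt_or_ge m a with h | h
    · rw [h0 m h] at ht; simp at ht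
    refine ⟨h, ?_⟩
    by_contra hc
    push_neg at hc
    have hj : m = a + 2*((m-a)/2) + 1 := by omega
    have := (h2 ((m-a)/2) (by omega)).1
    rw [hj, this] at ht; simp at ht
  · rintro ⟨ha, hd⟩
    rcases hd with hev | he
    · rcases Nat.eq_or_lt_of_le ha with h | h
      · rw [← h]; exact h1
      · have hj : m = a + 2*((m-a)/2 - 1) + 2 := by omega
        rw [hj]; exact (h2 ((m-a)/2 - 1) (by omega)).2
    · rw [he]; exact hA1

/-- full A-win configuration with first tail-false at `q` -/
lemma trueIff_A (h0 : ∀ i < a, ω i = false) (h1 : ω a = true)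
    (h2 : ∀ j < k, ω (a+2*j+1) = false ∧ ω (a+2*j+2) = true)
    (hA1 : ω (a+2*k+1) = true) {q : ℕ} (hq : a+2*k+2 ≤ q)
    (hmid : ∀ i, a+2*k+2 ≤ i → i < q → ω i = true) (hqf : ω q = false) :
    ∀ m ≤ q, (ω m = true ↔ (a ≤ m ∧ m ≠ q ∧ ((m - a) % 2 = 0 ∨ a+2*k+1 ≤ m))) := by
  intro m hm
  rcases lt_or_ge m (a+2*k+2) with h | h
  · rw [trueIff_Apre h0 h1 h2 hA1 m h]
    constructor
    · intro hc; exact ⟨hc.1, by omega, by omega⟩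
    · intro hc; exact ⟨hc.1, by omega⟩
  · rcases lt_or_ge m q with h' | h'
    · rw [hmid m h h']
      constructor
      · intro _; exact ⟨by omega, by omega, by omega⟩
      · intro _; rfl
    · have hmq : m = q := by omega
      rw [hmq, hqf]
      constructor
      · intro hc; simp at hc
      · intro hc; omega

/-- all-true tail A configuration `T^a (HT)^k H H H…` -/
lemma trueIff_Ainf (h0 : ∀ i < a, ω i = false) (h1 : ω a = true)
    (h2 : ∀ j < k, ω (a+2*j+1) = false ∧ ω (a+2*j+2) = true)
    (hA1 : ω (a+2*k+1) = true) (htail : ∀ t, ω (a+2*k+2+t) = true) :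
    ∀ m, (ω m = true ↔ (a ≤ m ∧ ((m - a) % 2 = 0 ∨ a+2*k+1 ≤ m))) := by
  intro m
  rcases lt_or_ge m (a+2*k+2) with h | h
  · rw [trueIff_Apre h0 h1 h2 hA1 m h]
    constructor
    · intro hc; exact ⟨hc.1, by omega⟩
    · intro hc; exact ⟨hc.1, by omega⟩
  · have hj : m = a+2*k+2 + (m - (a+2*k+2)) := by omega
    rw [hj, htail]
    constructor
    · intro _; constructor <;> omega
    · intro _; rfl

lemma noA_inf (h0 : ∀ i < a, ω i = false) (h1 : ω a = true)
    (h2 : ∀ j < k, ω (a+2*j+1) = false ∧ ω (a+2*j+2) = true)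
    (hA1 : ω (a+2*k+1) = true) (htail : ∀ t, ω (a+2*k+2+t) = true) :
    ∀ n, ¬ occA ω n := by
  rintro n ⟨t1, t2, t3⟩
  have c1 := (trueIff_Ainf h0 h1 h2 hA1 htail n).mp t1
  have c2 := (trueIff_Ainf h0 h1 h2 hA1 htail (n+1)).mp t2
  have c3 : ¬ (a ≤ n+2 ∧ ((n+2 - a) % 2 = 0 ∨ a+2*k+1 ≤ n+2)) := by
    intro hc
    rw [(trueIff_Ainf h0 h1 h2 hA1 htail (n+2)).mpr hc] at t3
    simp at t3
  omega

lemma noB_inf (h0 : ∀ i < a, ω i = false) (h1 : ω a = true)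
    (h2 : ∀ j < k, ω (a+2*j+1) = false ∧ ω (a+2*j+2) = true)
    (hA1 : ω (a+2*k+1) = true) (htail : ∀ t, ω (a+2*k+2+t) = true) :
    ∀ n, ¬ occB ω n := by
  rintro n ⟨t1, t2, t3⟩
  have c1 := (trueIff_Ainf h0 h1 h2 hA1 htail n).mp t1
  have c2 : ¬ (a ≤ n+1 ∧ ((n+1 - a) % 2 = 0 ∨ a+2*k+1 ≤ n+1)) := by
    intro hc
    rw [(trueIff_Ainf h0 h1 h2 hA1 htail (n+1)).mpr hc] at t2
    simp at t2
  have c3 : ¬ (a ≤ n+2 ∧ ((n+2 - a) % 2 = 0 ∨ a+2*k+1 ≤ n+2)) := by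
    intro hc
    rw [(trueIff_Ainf h0 h1 h2 hA1 htail (n+2)).mpr hc] at t3
    simp at t3
  omega


/-! ### win events -/

def winA (a k : ℕ) (ω : ℕ → Bool) : Prop :=
  (∀ i < a, ω i = false) ∧ ω a = true ∧
    (∀ j < k, ω (a+2*j+1) = false ∧ ω (a+2*j+2) = true) ∧
    ω (a+2*k+1) = true ∧ ∃ t, ω (a+2*k+2+t) = false

def winB (a k : ℕ) (ω : ℕ → Bool) : Prop :=
  (∀ i < a, ω i = false) ∧ ω a = true ∧
    (∀ j < k, ω (a+2*j+1) = false ∧ ω (a+2*j+2) = true) ∧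
    ω (a+2*k+1) = false ∧ ω (a+2*k+2) = false

lemma winB_lt (h : winB a k ω) :
    hitTime ![true,false,false] ω < hitTime ![true,true,false] ω := by
  obtain ⟨h0, h1, h2, hA1, hB2⟩ := h
  have hocc : occB ω (a+2*k) := by
    refine ⟨?_, ?_, ?_⟩
    · exact (trueIff_B h0 h1 h2 hA1 hB2 (a+2*k) (by omega)).mpr ⟨by omega, by omega, by omega⟩
    · exact hA1
    · exact hB2
  have hle := hitTime_le ((occB_iff ω (a+2*k)).mpr hocc)
  have hlt : ((a+2*k : ℕ) : ℕ∞) < hitTime ![true,true,false] ω := by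
    apply lt_hitTime
    intro m hm hoc
    obtain ⟨t1, t2, _⟩ := (occA_iff ω m).mp hoc
    have c1 := (trueIff_B h0 h1 h2 hA1 hB2 m (by omega)).mp t1
    have c2 := (trueIff_B h0 h1 h2 hA1 hB2 (m+1) (by omega)).mp t2
    omega
  exact lt_of_le_of_lt hle hlt

lemma winA_lt (h : winA a k ω) :
    hitTime ![true,true,false] ω < hitTime ![true,false,false] ω := by
  obtain ⟨h0, h1, h2, hA1, hex⟩ := h
  classical
  set t0 := Nat.find hex with ht0
  have hqf : ω (a+2*k+2+t0) = false := Nat.find_spec hex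
  set q := a+2*k+2+t0 with hqdef
  have hq : a+2*k+2 ≤ q := by omega
  have hmid : ∀ i, a+2*k+2 ≤ i → i < q → ω i = true := by
    intro i hi1 hi2
    have hlt : i - (a+2*k+2) < t0 := by omega
    have := Nat.find_min hex hlt
    have hi : a+2*k+2 + (i - (a+2*k+2)) = i := by omega
    rw [hi] at this
    simpa using this
  have hTI := trueIff_A h0 h1 h2 hA1 hq hmid hqf
  have hocc : occA ω (a+2*k+t0) := by
    refine ⟨?_, ?_, ?_⟩
    · exact (hTI (a+2*k+t0) (by omega)).mpr ⟨by omega, by omega, by omega⟩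
    · exact (hTI (a+2*k+t0+1) (by omega)).mpr ⟨by omega, by omega, by omega⟩
    · have he : a+2*k+t0+2 = q := by omega
      rw [he]; exact hqf
  have hle := hitTime_le ((occA_iff ω (a+2*k+t0)).mpr hocc)
  have hlt : ((a+2*k+t0 : ℕ) : ℕ∞) < hitTime ![true,false,false] ω := by
    apply lt_hitTime
    intro m hm hoc
    obtain ⟨t1, t2, t3⟩ := (occB_iff ω m).mp hoc
    have c1 := (hTI m (by omega)).mp t1
    have c2 : ¬ (a ≤ m+1 ∧ m+1 ≠ q ∧ ((m+1 - a) % 2 = 0 ∨ a+2*k+1 ≤ m+1)) := by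
      intro hc
      rw [(hTI (m+1) (by omega)).mpr hc] at t2; simp at t2
    have c3 : ¬ (a ≤ m+2 ∧ m+2 ≠ q ∧ ((m+2 - a) % 2 = 0 ∨ a+2*k+1 ≤ m+2)) := by
      intro hc
      rw [(hTI (m+2) (by omega)).mpr hc] at t3; simp at t3
    omega
  exact lt_of_le_of_lt hle hlt

lemma winA_unique {a' k' : ℕ} (h : winA a k ω) (h' : winA a' k' ω) : a = a' ∧ k = k' := by
  obtain ⟨h0, h1, h2, hA1, -⟩ := h
  obtain ⟨h0', h1', h2', hA1', -⟩ := h'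
  have haa : a = a' := by
    rcases Nat.lt_trichotomy a a' with hlt | heq | hgt
    · rw [h0' a hlt] at h1; simp at h1
    · exact heq
    · rw [h0 a' hgt] at h1'; simp at h1'
  subst haa
  refine ⟨rfl, ?_⟩
  rcases Nat.lt_trichotomy k k' with hlt | heq | hgt
  · rw [(h2' k hlt).1] at hA1; simp at hA1
  · exact heq
  · rw [(h2 k' hgt).1] at hA1'; simp at hA1'

lemma winB_unique {a' k' : ℕ} (h : winB a k ω) (h' : winB a' k' ω) : a = a' ∧ k = k' := by
  obtain ⟨h0, h1, h2, hA1, hB2⟩ := h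
  obtain ⟨h0', h1', h2', hA1', hB2'⟩ := h'
  have haa : a = a' := by
    rcases Nat.lt_trichotomy a a' with hlt | heq | hgt
    · rw [h0' a hlt] at h1; simp at h1
    · exact heq
    · rw [h0 a' hgt] at h1'; simp at h1'
  subst haa
  refine ⟨rfl, ?_⟩
  rcases Nat.lt_trichotomy k k' with hlt | heq | hgt
  · rw [(h2' k hlt).2] at hB2; simp at hB2
  · exact heq
  · rw [(h2 k' hgt).2] at hB2'; simp at hB2'

/-! ### set equalities -/

lemma setA_eq :
    {ω : ℕ → Bool | hitTime ![true,true,false] ω < hitTime ![true,false,false] ω} =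
      ⋃ x : ℕ × ℕ, {ω | winA x.1 x.2 ω} := by
  classical
  ext ω
  simp only [Set.mem_setOf_eq, Set.mem_iUnion]
  constructor
  · intro h
    obtain ⟨n, hn⟩ := exists_occ (ne_top_of_lt h)
    replace hn := (occA_iff ω n).mp hn
    have hex1 : ∃ i, ω i = true := ⟨n, hn.1⟩
    set a := Nat.find hex1 with hadef
    have h1 : ω a = true := Nat.find_spec hex1
    have h0 : ∀ i < a, ω i = false := fun i hi => by
      have := Nat.find_min hex1 hi; simpa using this
    have hbr : ∃ m, (ω (a+2*m+1) = true ∨ ω (a+2*m+2) = false) := by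
      by_contra hc
      push_neg at hc
      have hodd : ∀ j, ω (a+2*j+1) = false := fun j => by
        have := (hc j).1; simpa using this
      have hevn : ∀ j, ω (a+2*j+2) = true := fun j => by
        have := (hc j).2; simpa using this
      exact noA_alt h0 h1 hodd hevn n hn
    set k := Nat.find hbr with hkdef
    have hchain : ∀ j < k, ω (a+2*j+1) = false ∧ ω (a+2*j+2) = true := by
      intro j hj
      have := Nat.find_min hbr hj
      push_neg at this
      exact ⟨by simpa using this.1, by simpa using this.2⟩
    have hsp := Nat.find_spec hbr
    cases hA1 : ω (a+2*k+1) with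
    | false =>
      have hB2 : ω (a+2*k+2) = false := by
        rcases hsp with h' | h'
        · rw [hA1] at h'; simp at h'
        · exact h'
      exact absurd h (lt_asymm (winB_lt ⟨h0, h1, hchain, hA1, hB2⟩))
    | true =>
      have hex2 : ∃ t, ω (a+2*k+2+t) = false := by
        by_contra hc
        push_neg at hc
        have htail : ∀ t, ω (a+2*k+2+t) = true := fun t => by
          have := hc t; simpa using this
        exact noA_inf h0 h1 hchain hA1 htail n hn
      exact ⟨(a, k), h0, h1, hchain, hA1, hex2⟩
  · rintro ⟨⟨a, k⟩, hw⟩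
    exact winA_lt hw

lemma setB_eq :
    {ω : ℕ → Bool | hitTime ![true,false,false] ω < hitTime ![true,true,false] ω} =
      ⋃ x : ℕ × ℕ, {ω | winB x.1 x.2 ω} := by
  classical
  ext ω
  simp only [Set.mem_setOf_eq, Set.mem_iUnion]
  constructor
  · intro h
    obtain ⟨n, hn⟩ := exists_occ (ne_top_of_lt h)
    replace hn := (occB_iff ω n).mp hn
    have hex1 : ∃ i, ω i = true := ⟨n, hn.1⟩
    set a := Nat.find hex1 with hadef
    have h1 : ω a = true := Nat.find_spec hex1
    have h0 : ∀ i < a, ω i = false := fun i hi => by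
      have := Nat.find_min hex1 hi; simpa using this
    have hbr : ∃ m, (ω (a+2*m+1) = true ∨ ω (a+2*m+2) = false) := by
      by_contra hc
      push_neg at hc
      have hodd : ∀ j, ω (a+2*j+1) = false := fun j => by
        have := (hc j).1; simpa using this
      have hevn : ∀ j, ω (a+2*j+2) = true := fun j => by
        have := (hc j).2; simpa using this
      exact noB_alt h0 h1 hodd hevn n hn
    set k := Nat.find hbr with hkdef
    have hchain : ∀ j < k, ω (a+2*j+1) = false ∧ ω (a+2*j+2) = true := by
      intro j hj
      have := Nat.find_min hbr hj
      push_neg at this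
      exact ⟨by simpa using this.1, by simpa using this.2⟩
    have hsp := Nat.find_spec hbr
    cases hA1 : ω (a+2*k+1) with
    | false =>
      have hB2 : ω (a+2*k+2) = false := by
        rcases hsp with h' | h'
        · rw [hA1] at h'; simp at h'
        · exact h'
      exact ⟨(a, k), h0, h1, hchain, hA1, hB2⟩
    | true =>
      cases hc : (∃ t, ω (a+2*k+2+t) = false : Prop) |> Classical.em with
      | inl hex2 =>
        exact absurd h (lt_asymm (winA_lt ⟨h0, h1, hchain, hA1, hex2⟩))
      | inr hnex =>
        push_neg at hnex
        have htail : ∀ t, ω (a+2*k+2+t) = true := fun t => by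
          have := hnex t; simpa using this
        exact absurd hn (noB_inf h0 h1 hchain hA1 htail n)
  · rintro ⟨⟨a, k⟩, hw⟩
    exact winB_lt hw


/-! ### cylinder descriptions -/

def gA (a k i : ℕ) : Bool := decide (a ≤ i ∧ ((i - a) % 2 = 0 ∨ i = a+2*k+1))
def gB (a k i : ℕ) : Bool := decide (a ≤ i ∧ (i - a) % 2 = 0 ∧ i ≤ a+2*k)

lemma bool_eq_decide {b : Bool} {P : Prop} [Decidable P] (h : b = true ↔ P) : b = decide P := by
  cases b
  · simp only [Bool.false_eq_true, false_iff] at h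
    simp [h]
  · simp only [true_iff] at h
    simp [h]

lemma winA_cyl (a k : ℕ) :
    {ω : ℕ → Bool | winA a k ω} =
      {ω : ℕ → Bool | ∀ i ∈ Finset.range (a+2*k+2), ω i = gA a k i} ∩
        ⋃ t, {ω : ℕ → Bool | ω (a+2*k+2+t) = false} := by
  ext ω
  simp only [Set.mem_setOf_eq, Set.mem_inter_iff, Set.mem_iUnion, Finset.mem_range]
  constructor
  · rintro ⟨h0, h1, h2, hA1, hex⟩
    refine ⟨fun i hi => bool_eq_decide (trueIff_Apre h0 h1 h2 hA1 i hi), hex⟩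
  · rintro ⟨hcyl, hex⟩
    refine ⟨?_, ?_, ?_, ?_, hex⟩
    · intro i hi
      rw [hcyl i (by omega)]
      simp only [gA, decide_eq_false_iff_not]
      omega
    · rw [hcyl a (by omega)]
      simp only [gA, decide_eq_true_eq]
      omega
    · intro j hj
      constructor
      · rw [hcyl (a+2*j+1) (by omega)]
        simp only [gA, decide_eq_false_iff_not]
        omega
      · rw [hcyl (a+2*j+2) (by omega)]
        simp only [gA, decide_eq_true_eq]
        omega
    · rw [hcyl (a+2*k+1) (by omega)]
      simp only [gA, decide_eq_true_eq]
      exact ⟨by omega, Or.inr trivial⟩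

lemma winB_cyl (a k : ℕ) :
    {ω : ℕ → Bool | winB a k ω} =
      {ω : ℕ → Bool | ∀ i ∈ Finset.range (a+2*k+3), ω i = gB a k i} := by
  ext ω
  simp only [Set.mem_setOf_eq, Finset.mem_range]
  constructor
  · rintro ⟨h0, h1, h2, hA1, hB2⟩
    exact fun i hi => bool_eq_decide (trueIff_B h0 h1 h2 hA1 hB2 i (by omega))
  · intro hcyl
    refine ⟨?_, ?_, ?_, ?_, ?_⟩
    · intro i hi
      rw [hcyl i (by omega)]
      simp only [gB, decide_eq_false_iff_not]
      omega
    · rw [hcyl a (by omega)]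
      simp only [gB, decide_eq_true_eq]
      omega
    · intro j hj
      constructor
      · rw [hcyl (a+2*j+1) (by omega)]
        simp only [gB, decide_eq_false_iff_not]
        omega
      · rw [hcyl (a+2*j+2) (by omega)]
        simp only [gB, decide_eq_true_eq]
        omega
    · rw [hcyl (a+2*k+1) (by omega)]
      simp only [gB, decide_eq_false_iff_not]
      omega
    · rw [hcyl (a+2*k+2) (by omega)]
      simp only [gB, decide_eq_false_iff_not]
      omega

/-! ### measurability -/

lemma meas_single (i : ℕ) (b : Bool) : MeasurableSet {ω : ℕ → Bool | ω i = b} := by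
  have he : {ω : ℕ → Bool | ω i = b} = (fun ω : ℕ → Bool => ω i) ⁻¹' {b} := rfl
  rw [he]
  exact measurable_pi_apply i (measurableSet_singleton b)

lemma meas_cyl (L : ℕ) (g : ℕ → Bool) :
    MeasurableSet {ω : ℕ → Bool | ∀ i ∈ Finset.range L, ω i = g i} := by
  have he : {ω : ℕ → Bool | ∀ i ∈ Finset.range L, ω i = g i} =
      ⋂ i ∈ Finset.range L, {ω : ℕ → Bool | ω i = g i} := by
    ext ω; simp
  rw [he]
  exact MeasurableSet.biInter (Set.to_countable _) fun i _ => meas_single i (g i)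

lemma meas_winA (a k : ℕ) : MeasurableSet {ω : ℕ → Bool | winA a k ω} := by
  rw [winA_cyl]
  exact (meas_cyl _ _).inter (MeasurableSet.iUnion fun t => meas_single _ _)

lemma meas_winB (a k : ℕ) : MeasurableSet {ω : ℕ → Bool | winB a k ω} := by
  rw [winB_cyl]
  exact meas_cyl _ _

/-! ### products -/

lemma prod_alt (q r : ℝ≥0∞) :
    ∀ k, ∏ i ∈ Finset.range (2*k), (if i % 2 = 0 then q else r) = (q*r)^k := by
  intro k
  induction k with
  | zero => simp
  | succ n ih =>
    have h2 : 2*(n+1) = 2*n+1+1 := by ring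
    rw [h2, Finset.prod_range_succ, Finset.prod_range_succ, ih]
    have e1 : (2*n) % 2 = 0 := by omega
    have e2 : (2*n+1) % 2 ≠ 0 := by omega
    rw [if_pos e1, if_neg e2]
    ring

lemma prod_prefix (q r : ℝ≥0∞) (a : ℕ) (g : ℕ → Bool) (hg : ∀ i < a, g i = false) :
    ∏ i ∈ Finset.range a, (if g i then q else r) = r^a := by
  have hc : ∀ i ∈ Finset.range a, (if g i then q else r) = r := by
    intro i hi
    simp only [Finset.mem_range] at hi
    rw [hg i hi]
    simp
  rw [Finset.prod_congr rfl hc, Finset.prod_const, Finset.card_range]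

lemma prodA (q r : ℝ≥0∞) (a k : ℕ) :
    ∏ i ∈ Finset.range (a+2*k+2), (if gA a k i then q else r) = r^a * ((q*r)^k * (q*q)) := by
  have hsplit : a+2*k+2 = a + (2*k+2) := by ring
  rw [hsplit, Finset.prod_range_add]
  have h1 : ∏ i ∈ Finset.range a, (if gA a k i then q else r) = r^a := by
    apply prod_prefix
    intro i hi
    simp only [gA, decide_eq_false_iff_not]
    omega
  rw [h1]
  congr 1
  have h2 : ∀ i, gA a k (a+i) = decide (i % 2 = 0 ∨ i = 2*k+1) := by
    intro i
    simp only [gA]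
    rw [decide_eq_decide]
    omega
  calc ∏ i ∈ Finset.range (2*k+2), (if gA a k (a+i) then q else r)
      = ∏ i ∈ Finset.range (2*k+2), (if (i % 2 = 0 ∨ i = 2*k+1 : Prop) then q else r) := by
        apply Finset.prod_congr rfl
        intro i _
        rw [h2 i]
        simp only [decide_eq_true_eq]
    _ = (∏ i ∈ Finset.range (2*k), (if i % 2 = 0 then q else r)) * q * q := by
        rw [show 2*k+2 = (2*k+1)+1 from rfl, Finset.prod_range_succ,
          show 2*k+1 = (2*k)+1 from rfl, Finset.prod_range_succ,
          if_pos (show ((2*k) % 2 = 0 ∨ 2*k = 2*k+1) by omega),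
          if_pos (show ((2*k+1) % 2 = 0 ∨ 2*k+1 = 2*k+1) by omega)]
        congr 2
        apply Finset.prod_congr rfl
        intro i hi
        simp only [Finset.mem_range] at hi
        by_cases h : i % 2 = 0
        · rw [if_pos (Or.inl h), if_pos h]
        · rw [if_neg (by omega), if_neg h]
    _ = (q*r)^k * (q*q) := by rw [prod_alt]; ring

lemma prodB (q r : ℝ≥0∞) (a k : ℕ) :
    ∏ i ∈ Finset.range (a+2*k+3), (if gB a k i then q else r) = r^a * ((q*r)^k * (q*(r*r))) := by
  have hsplit : a+2*k+3 = a + (2*k+3) := by ring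
  rw [hsplit, Finset.prod_range_add]
  have h1 : ∏ i ∈ Finset.range a, (if gB a k i then q else r) = r^a := by
    apply prod_prefix
    intro i hi
    simp only [gB, decide_eq_false_iff_not]
    omega
  rw [h1]
  congr 1
  have h2 : ∀ i, gB a k (a+i) = decide (i % 2 = 0 ∧ i ≤ 2*k) := by
    intro i
    simp only [gB]
    rw [decide_eq_decide]
    omega
  calc ∏ i ∈ Finset.range (2*k+3), (if gB a k (a+i) then q else r)
      = ∏ i ∈ Finset.range (2*k+3), (if (i % 2 = 0 ∧ i ≤ 2*k : Prop) then q else r) := by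
        apply Finset.prod_congr rfl
        intro i _
        rw [h2 i]
        simp only [decide_eq_true_eq]
    _ = (∏ i ∈ Finset.range (2*k), (if i % 2 = 0 then q else r)) * q * r * r := by
        rw [show 2*k+3 = (2*k+2)+1 from rfl, Finset.prod_range_succ,
          show 2*k+2 = (2*k+1)+1 from rfl, Finset.prod_range_succ,
          show 2*k+1 = (2*k)+1 from rfl, Finset.prod_range_succ,
          if_pos (show ((2*k) % 2 = 0 ∧ 2*k ≤ 2*k) by omega),
          if_neg (show ¬((2*k+1) % 2 = 0 ∧ 2*k+1 ≤ 2*k) by omega),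
          if_neg (show ¬((2*k+2) % 2 = 0 ∧ 2*k+2 ≤ 2*k) by omega)]
        congr 3
        apply Finset.prod_congr rfl
        intro i hi
        simp only [Finset.mem_range] at hi
        by_cases h : i % 2 = 0
        · rw [if_pos (by omega : (i % 2 = 0 ∧ i ≤ 2*k)), if_pos h]
        · rw [if_neg (by omega), if_neg h]
    _ = (q*r)^k * (q*(r*r)) := by rw [prod_alt]; ring


/-! ### measures of the win events -/

lemma tail_null {μ : MeasureTheory.Measure (ℕ → Bool)} {p : ℝ} (hp0 : 0 ≤ p) (hp1 : p < 1)
    (hμ : ∀ (F : Finset ℕ) (g : ℕ → Bool),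
      μ {ω | ∀ i ∈ F, ω i = g i} = ∏ i ∈ F, ENNReal.ofReal (if g i then p else 1 - p))
    (L : ℕ) (g : ℕ → Bool) :
    μ ({ω : ℕ → Bool | ∀ i ∈ Finset.range L, ω i = g i} ∩
        (⋃ t, {ω : ℕ → Bool | ω (L+t) = false})ᶜ) = 0 := by
  set S := {ω : ℕ → Bool | ∀ i ∈ Finset.range L, ω i = g i} ∩
      (⋃ t, {ω : ℕ → Bool | ω (L+t) = false})ᶜ with hS
  have hb : ∀ N : ℕ, μ S ≤ ENNReal.ofReal p ^ N := by
    intro N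
    set g' : ℕ → Bool := fun i => if i < L then g i else true with hg'
    have hsub : S ⊆ {ω : ℕ → Bool | ∀ i ∈ Finset.range (L+N), ω i = g' i} := by
      rintro ω ⟨hc, ht⟩ i hi
      simp only [Set.mem_compl_iff, Set.mem_iUnion, Set.mem_setOf_eq, not_exists] at ht
      by_cases h : i < L
      · rw [hg']
        simp only [if_pos h]
        exact hc i (Finset.mem_range.mpr h)
      · rw [hg']
        simp only [if_neg h]
        have h2 := ht (i - L)
        have h3 : L + (i - L) = i := by omega
        rw [h3] at h2
        simpa using h2
    calc μ S ≤ μ {ω : ℕ → Bool | ∀ i ∈ Finset.range (L+N), ω i = g' i} :=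
          MeasureTheory.measure_mono hsub
      _ = ∏ i ∈ Finset.range (L+N), ENNReal.ofReal (if g' i then p else 1 - p) := hμ _ _
      _ = (∏ i ∈ Finset.range L, ENNReal.ofReal (if g' i then p else 1 - p)) *
            ∏ i ∈ Finset.range N, ENNReal.ofReal (if g' (L+i) then p else 1 - p) :=
          Finset.prod_range_add _ L N
      _ ≤ 1 * ENNReal.ofReal p ^ N := by
          apply mul_le_mul'
          · apply Finset.prod_le_one (fun i _ => zero_le)
            intro i _
            rw [← ENNReal.ofReal_one]
            apply ENNReal.ofReal_le_ofReal
            by_cases h : g' i <;> simp [h] <;> linarith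
          · have he : ∀ i ∈ Finset.range N,
                ENNReal.ofReal (if g' (L+i) then p else 1 - p) = ENNReal.ofReal p := by
              intro i _
              rw [hg']
              simp only [if_neg (by omega : ¬ (L+i < L))]
              simp
            rw [Finset.prod_congr rfl he, Finset.prod_const, Finset.card_range]
      _ = ENNReal.ofReal p ^ N := one_mul _
  refine le_antisymm ?_ zero_le
  exact ge_of_tendsto'
    (ENNReal.tendsto_pow_atTop_nhds_zero_of_lt_one (ENNReal.ofReal_lt_one.mpr hp1)) hb

lemma mu_winA {μ : MeasureTheory.Measure (ℕ → Bool)} {p : ℝ} (hp0 : 0 < p) (hp1 : p < 1)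
    (hμ : ∀ (F : Finset ℕ) (g : ℕ → Bool),
      μ {ω | ∀ i ∈ F, ω i = g i} = ∏ i ∈ F, ENNReal.ofReal (if g i then p else 1 - p))
    (a k : ℕ) :
    μ {ω : ℕ → Bool | winA a k ω} =
      ENNReal.ofReal (1-p) ^ a * ((ENNReal.ofReal p * ENNReal.ofReal (1-p)) ^ k *
        (ENNReal.ofReal p * ENNReal.ofReal p)) := by
  rw [winA_cyl]
  set C := {ω : ℕ → Bool | ∀ i ∈ Finset.range (a+2*k+2), ω i = gA a k i} with hC
  set U := ⋃ t, {ω : ℕ → Bool | ω (a+2*k+2+t) = false} with hU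
  have hnull : μ (C ∩ Uᶜ) = 0 := tail_null hp0.le hp1 hμ (a+2*k+2) (gA a k)
  have hCU : μ (C ∩ U) = μ C := by
    refine le_antisymm (MeasureTheory.measure_mono Set.inter_subset_left) ?_
    calc μ C = μ ((C ∩ U) ∪ (C ∩ Uᶜ)) := by rw [Set.inter_union_compl]
      _ ≤ μ (C ∩ U) + μ (C ∩ Uᶜ) := MeasureTheory.measure_union_le _ _
      _ = μ (C ∩ U) := by rw [hnull, add_zero]
  rw [hCU, hC, hμ (Finset.range (a+2*k+2)) (gA a k)]
  have hsp : ∀ i ∈ Finset.range (a+2*k+2), ENNReal.ofReal (if gA a k i then p else 1 - p) =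
      (if gA a k i then ENNReal.ofReal p else ENNReal.ofReal (1-p)) := by
    intro i _
    exact apply_ite ENNReal.ofReal _ _ _
  rw [Finset.prod_congr rfl hsp]
  exact prodA _ _ a k

lemma mu_winB {μ : MeasureTheory.Measure (ℕ → Bool)} {p : ℝ}
    (hμ : ∀ (F : Finset ℕ) (g : ℕ → Bool),
      μ {ω | ∀ i ∈ F, ω i = g i} = ∏ i ∈ F, ENNReal.ofReal (if g i then p else 1 - p))
    (a k : ℕ) :
    μ {ω : ℕ → Bool | winB a k ω} =
      ENNReal.ofReal (1-p) ^ a * ((ENNReal.ofReal p * ENNReal.ofReal (1-p)) ^ k *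
        (ENNReal.ofReal p * (ENNReal.ofReal (1-p) * ENNReal.ofReal (1-p)))) := by
  rw [winB_cyl, hμ (Finset.range (a+2*k+3)) (gB a k)]
  have hsp : ∀ i ∈ Finset.range (a+2*k+3), ENNReal.ofReal (if gB a k i then p else 1 - p) =
      (if gB a k i then ENNReal.ofReal p else ENNReal.ofReal (1-p)) := by
    intro i _
    exact apply_ite ENNReal.ofReal _ _ _
  rw [Finset.prod_congr rfl hsp]
  exact prodB _ _ a k

end Penney

/-- Penney-ante for `HHT` versus `HTT` with a `p`-biased coin: the probability that
`HHT` occurs strictly first is `p/(p²-p+1)` and the probability that `HTT` occurs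
strictly first is `(1-p)²/(p²-p+1)`.  The measure `μ` is the product measure on
`ℕ → Bool` with each coordinate independently `true` with probability `p`,
characterized by its values on cylinder sets. -/
theorem stmt15 (p : ℝ) (hp0 : 0 < p) (hp1 : p < 1)
    (μ : MeasureTheory.Measure (ℕ → Bool)) [MeasureTheory.IsProbabilityMeasure μ]
    (hμ : ∀ (F : Finset ℕ) (g : ℕ → Bool),
      μ {ω | ∀ i ∈ F, ω i = g i} =
        ∏ i ∈ F, ENNReal.ofReal (if g i then p else 1 - p)) :
    μ {ω | hitTime ![true, true, false] ω < hitTime ![true, false, false] ω} =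
        ENNReal.ofReal (p / (p ^ 2 - p + 1)) ∧
      μ {ω | hitTime ![true, false, false] ω < hitTime ![true, true, false] ω} =
        ENNReal.ofReal ((1 - p) ^ 2 / (p ^ 2 - p + 1)) := by
  classical
  have hq0 : ENNReal.ofReal p ≠ 0 := (ENNReal.ofReal_pos.mpr hp0).ne'
  have hqt : ENNReal.ofReal p ≠ ⊤ := ENNReal.ofReal_ne_top
  have hDpos : (0:ℝ) < p^2 - p + 1 := by nlinarith [sq_nonneg p]
  have h1r : (1:ℝ≥0∞) - ENNReal.ofReal (1-p) = ENNReal.ofReal p := by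
    rw [← ENNReal.ofReal_one, ← ENNReal.ofReal_sub 1 (by linarith : (0:ℝ) ≤ 1-p)]
    norm_num
  have hqr : ENNReal.ofReal p * ENNReal.ofReal (1-p) = ENNReal.ofReal (p*(1-p)) :=
    (ENNReal.ofReal_mul hp0.le).symm
  have hD : (1:ℝ≥0∞) - ENNReal.ofReal (p*(1-p)) = ENNReal.ofReal (p^2-p+1) := by
    rw [← ENNReal.ofReal_one, ← ENNReal.ofReal_sub 1 (by nlinarith : (0:ℝ) ≤ p*(1-p))]
    congr 1
    ring
  have hgeom1 : ∑' (a : ℕ), (ENNReal.ofReal (1-p))^a = (ENNReal.ofReal p)⁻¹ := by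
    rw [ENNReal.tsum_geometric, h1r]
  have hgeom2 : ∑' (k : ℕ), (ENNReal.ofReal p * ENNReal.ofReal (1-p))^k =
      (ENNReal.ofReal (p^2-p+1))⁻¹ := by
    rw [ENNReal.tsum_geometric, hqr, hD]
  constructor
  · rw [Penney.setA_eq]
    have hdisj : Pairwise (Function.onFun Disjoint
        (fun x : ℕ×ℕ => {ω : ℕ → Bool | Penney.winA x.1 x.2 ω})) := by
      rintro ⟨a,k⟩ ⟨a',k'⟩ hne
      simp only [Function.onFun]
      rw [Set.disjoint_left]
      intro ω h h'
      obtain ⟨h1, h2⟩ := Penney.winA_unique h h'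
      exact hne (by simp [Prod.ext_iff, h1, h2])
    rw [MeasureTheory.measure_iUnion hdisj (fun x => Penney.meas_winA x.1 x.2)]
    have hval : ∀ x : ℕ×ℕ, μ {ω : ℕ → Bool | Penney.winA x.1 x.2 ω} =
        (ENNReal.ofReal (1-p))^x.1 * ((ENNReal.ofReal p * ENNReal.ofReal (1-p))^x.2 *
          (ENNReal.ofReal p * ENNReal.ofReal p)) :=
      fun x => Penney.mu_winA hp0 hp1 hμ x.1 x.2
    rw [tsum_congr hval, ENNReal.tsum_prod (f := fun a k => (ENNReal.ofReal (1-p))^a *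
      ((ENNReal.ofReal p * ENNReal.ofReal (1-p))^k * (ENNReal.ofReal p * ENNReal.ofReal p)))]
    have hin : ∀ a : ℕ, ∑' (k : ℕ), (ENNReal.ofReal (1-p))^a *
        ((ENNReal.ofReal p * ENNReal.ofReal (1-p))^k * (ENNReal.ofReal p * ENNReal.ofReal p)) =
        (ENNReal.ofReal (1-p))^a * ((ENNReal.ofReal (p^2-p+1))⁻¹ *
          (ENNReal.ofReal p * ENNReal.ofReal p)) := by
      intro a
      rw [ENNReal.tsum_mul_left, ENNReal.tsum_mul_right, hgeom2]
    rw [tsum_congr hin, ENNReal.tsum_mul_right, hgeom1]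
    calc (ENNReal.ofReal p)⁻¹ * ((ENNReal.ofReal (p^2-p+1))⁻¹ *
          (ENNReal.ofReal p * ENNReal.ofReal p))
        = ((ENNReal.ofReal p)⁻¹ * ENNReal.ofReal p) *
            (ENNReal.ofReal p * (ENNReal.ofReal (p^2-p+1))⁻¹) := by ring
      _ = ENNReal.ofReal p * (ENNReal.ofReal (p^2-p+1))⁻¹ := by
          rw [ENNReal.inv_mul_cancel hq0 hqt, one_mul]
      _ = ENNReal.ofReal p * ENNReal.ofReal ((p^2-p+1)⁻¹) := by
          rw [ENNReal.ofReal_inv_of_pos hDpos]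
      _ = ENNReal.ofReal (p * (p^2-p+1)⁻¹) := (ENNReal.ofReal_mul hp0.le).symm
      _ = ENNReal.ofReal (p / (p^2-p+1)) := by rw [div_eq_mul_inv]
  · rw [Penney.setB_eq]
    have hdisj : Pairwise (Function.onFun Disjoint
        (fun x : ℕ×ℕ => {ω : ℕ → Bool | Penney.winB x.1 x.2 ω})) := by
      rintro ⟨a,k⟩ ⟨a',k'⟩ hne
      simp only [Function.onFun]
      rw [Set.disjoint_left]
      intro ω h h'
      obtain ⟨h1, h2⟩ := Penney.winB_unique h h'
      exact hne (by simp [Prod.ext_iff, h1, h2])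
    rw [MeasureTheory.measure_iUnion hdisj (fun x => Penney.meas_winB x.1 x.2)]
    have hval : ∀ x : ℕ×ℕ, μ {ω : ℕ → Bool | Penney.winB x.1 x.2 ω} =
        (ENNReal.ofReal (1-p))^x.1 * ((ENNReal.ofReal p * ENNReal.ofReal (1-p))^x.2 *
          (ENNReal.ofReal p * (ENNReal.ofReal (1-p) * ENNReal.ofReal (1-p)))) :=
      fun x => Penney.mu_winB hμ x.1 x.2
    rw [tsum_congr hval, ENNReal.tsum_prod (f := fun a k => (ENNReal.ofReal (1-p))^a *
      ((ENNReal.ofReal p * ENNReal.ofReal (1-p))^k *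
        (ENNReal.ofReal p * (ENNReal.ofReal (1-p) * ENNReal.ofReal (1-p)))))]
    have hin : ∀ a : ℕ, ∑' (k : ℕ), (ENNReal.ofReal (1-p))^a *
        ((ENNReal.ofReal p * ENNReal.ofReal (1-p))^k *
          (ENNReal.ofReal p * (ENNReal.ofReal (1-p) * ENNReal.ofReal (1-p)))) =
        (ENNReal.ofReal (1-p))^a * ((ENNReal.ofReal (p^2-p+1))⁻¹ *
          (ENNReal.ofReal p * (ENNReal.ofReal (1-p) * ENNReal.ofReal (1-p)))) := by
      intro a
      rw [ENNReal.tsum_mul_left, ENNReal.tsum_mul_right, hgeom2]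
    rw [tsum_congr hin, ENNReal.tsum_mul_right, hgeom1]
    calc (ENNReal.ofReal p)⁻¹ * ((ENNReal.ofReal (p^2-p+1))⁻¹ *
          (ENNReal.ofReal p * (ENNReal.ofReal (1-p) * ENNReal.ofReal (1-p))))
        = ((ENNReal.ofReal p)⁻¹ * ENNReal.ofReal p) *
            (ENNReal.ofReal (1-p) * (ENNReal.ofReal (1-p) *
              (ENNReal.ofReal (p^2-p+1))⁻¹)) := by ring
      _ = ENNReal.ofReal (1-p) * (ENNReal.ofReal (1-p) *
            (ENNReal.ofReal (p^2-p+1))⁻¹) := by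
          rw [ENNReal.inv_mul_cancel hq0 hqt, one_mul]
      _ = ENNReal.ofReal (1-p) * (ENNReal.ofReal (1-p) *
            ENNReal.ofReal ((p^2-p+1)⁻¹)) := by
          rw [ENNReal.ofReal_inv_of_pos hDpos]
      _ = ENNReal.ofReal ((1-p) * ((1-p) * (p^2-p+1)⁻¹)) := by
          rw [ENNReal.ofReal_mul (by linarith : (0:ℝ) ≤ 1-p),
            ENNReal.ofReal_mul (by linarith : (0:ℝ) ≤ 1-p)]
      _ = ENNReal.ofReal ((1 - p) ^ 2 / (p ^ 2 - p + 1)) := by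
          congr 1
          ring
end
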